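/- arXiv:1805.09887 — 2 statements merged into one kernel-verified Lean document; each statement's English description precedes it below -/
import Mathlib

section
/- Let I be an instance of SPA-ST that admits a super-stable matching M. Then every weakly stable matching in I has cardinality |M|. -/
open scoped Classical

/-- An instance of the Student-Project Allocation problem with lecturer
preferences over students, with Ties (SPA-ST).  `sPref s p q` means student `s`
ranks project `p` at least as highly as project `q` (`p ⪰_s q`); `lPref k t t'`
means lecturer `k` ranks student `t` at least as highly as student `t'`. -/
structure SPAST (S P L : Type) [Fintype S] [Fintype P] [Fintype L]
    [DecidableEq S] [DecidableEq P] [DecidableEq L] where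
  /-- the lecturer offering each project -/
  lec : P → L
  /-- project capacities -/
  c : P → ℕ
  /-- lecturer capacities -/
  d : L → ℕ
  cpos : ∀ p : P, 0 < c p
  dpos : ∀ k : L, 0 < d k
  /-- the set of projects acceptable to each student -/
  acc : S → Finset P
  sPref : S → P → P → Prop
  lPref : L → S → S → Prop
  sRefl : ∀ s : S, ∀ p ∈ acc s, sPref s p p
  sTrans : ∀ s : S, ∀ p ∈ acc s, ∀ q ∈ acc s, ∀ r ∈ acc s,
    sPref s p q → sPref s q r → sPref s p r
  sTotal : ∀ s : S, ∀ p ∈ acc s, ∀ q ∈ acc s, sPref s p q ∨ sPref s q p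
  lRefl : ∀ k : L, ∀ t : S, (∃ p ∈ acc t, lec p = k) → lPref k t t
  lTrans : ∀ k : L, ∀ t1 t2 t3 : S,
    (∃ p ∈ acc t1, lec p = k) → (∃ p ∈ acc t2, lec p = k) → (∃ p ∈ acc t3, lec p = k) →
    lPref k t1 t2 → lPref k t2 t3 → lPref k t1 t3
  lTotal : ∀ k : L, ∀ t1 t2 : S,
    (∃ p ∈ acc t1, lec p = k) → (∃ p ∈ acc t2, lec p = k) →
    lPref k t1 t2 ∨ lPref k t2 t1
  capLB : ∀ p : P, c p ≤ d (lec p)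
  capUB : ∀ k : L, d k ≤ ∑ p ∈ Finset.univ.filter (fun p => lec p = k), c p

namespace SPAST

variable {S P L : Type} [Fintype S] [Fintype P] [Fintype L]
  [DecidableEq S] [DecidableEq P] [DecidableEq L]

/-- `M` is a matching: pairs are acceptable, each student is matched at most once,
and project and lecturer capacities are respected. -/
def IsMatching (I : SPAST S P L) (M : Finset (S × P)) : Prop :=
  (∀ x ∈ M, x.2 ∈ I.acc x.1) ∧
  (∀ s : S, ∀ p q : P, (s, p) ∈ M → (s, q) ∈ M → p = q) ∧
  (∀ p : P, (M.filter (fun x => x.2 = p)).card ≤ I.c p) ∧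
  (∀ k : L, (M.filter (fun x => I.lec x.2 = k)).card ≤ I.d k)

/-- The set `M(p)` of students assigned to project `p` in `M`. -/
def projAsg (M : Finset (S × P)) (p : P) : Finset S :=
  (M.filter (fun x => x.2 = p)).image Prod.fst

/-- The set `M(l_k)` of students assigned to lecturer `k` in `M`. -/
def lecAsg (I : SPAST S P L) (M : Finset (S × P)) (k : L) : Finset S :=
  (M.filter (fun x => I.lec x.2 = k)).image Prod.fst

/-- `t` is a least-preferred (worst) student of lecturer `k` in the set `T`. -/
def WorstIn (I : SPAST S P L) (k : L) (T : Finset S) (t : S) : Prop :=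
  t ∈ T ∧ ∀ t' ∈ T, I.lPref k t' t

/-- `(s, p)` is a super-blocking pair for `M`. -/
def SuperBlocking (I : SPAST S P L) (M : Finset (S × P)) (s : S) (p : P) : Prop :=
  p ∈ I.acc s ∧ (s, p) ∉ M ∧
  (∀ q : P, (s, q) ∈ M → ¬(I.sPref s q p ∧ ¬I.sPref s p q)) ∧
  (((projAsg M p).card < I.c p ∧ (lecAsg I M (I.lec p)).card < I.d (I.lec p)) ∨
   ((projAsg M p).card < I.c p ∧ (lecAsg I M (I.lec p)).card = I.d (I.lec p) ∧
     (s ∈ lecAsg I M (I.lec p) ∨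
      ∃ t : S, WorstIn I (I.lec p) (lecAsg I M (I.lec p)) t ∧ I.lPref (I.lec p) s t)) ∨
   ((projAsg M p).card = I.c p ∧
     ∃ t : S, WorstIn I (I.lec p) (projAsg M p) t ∧ I.lPref (I.lec p) s t))

/-- `(s, p)` is a weakly-blocking pair for `M`. -/
def WeakBlocking (I : SPAST S P L) (M : Finset (S × P)) (s : S) (p : P) : Prop :=
  p ∈ I.acc s ∧ (s, p) ∉ M ∧
  (∀ q : P, (s, q) ∈ M → I.sPref s p q ∧ ¬I.sPref s q p) ∧
  (((projAsg M p).card < I.c p ∧ (lecAsg I M (I.lec p)).card < I.d (I.lec p)) ∨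
   ((projAsg M p).card < I.c p ∧ (lecAsg I M (I.lec p)).card = I.d (I.lec p) ∧
     (s ∈ lecAsg I M (I.lec p) ∨
      ∃ t : S, WorstIn I (I.lec p) (lecAsg I M (I.lec p)) t ∧
        (I.lPref (I.lec p) s t ∧ ¬I.lPref (I.lec p) t s))) ∨
   ((projAsg M p).card = I.c p ∧
     ∃ t : S, WorstIn I (I.lec p) (projAsg M p) t ∧
       (I.lPref (I.lec p) s t ∧ ¬I.lPref (I.lec p) t s)))

/-- `M` is a super-stable matching in `I`. -/
def SuperStable (I : SPAST S P L) (M : Finset (S × P)) : Prop :=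
  I.IsMatching M ∧ ∀ (s : S) (p : P), ¬SuperBlocking I M s p

/-- `M` is a weakly stable matching in `I`. -/
def WeaklyStable (I : SPAST S P L) (M : Finset (S × P)) : Prop :=
  I.IsMatching M ∧ ∀ (s : S) (p : P), ¬WeakBlocking I M s p

/-- `I` is an SPA-S instance: all preference lists are strictly ordered
(the preorders are antisymmetric). -/
def StrictPrefs (I : SPAST S P L) : Prop :=
  (∀ s : S, ∀ p ∈ I.acc s, ∀ q ∈ I.acc s, I.sPref s p q → I.sPref s q p → p = q) ∧
  (∀ k : L, ∀ t t' : S, (∃ p ∈ I.acc t, I.lec p = k) → (∃ p ∈ I.acc t', I.lec p = k) →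
    I.lPref k t t' → I.lPref k t' t → t = t')

/-- `I'` is an SPA-S instance obtained from `I` by breaking the ties. -/
def TieBreaking (I I' : SPAST S P L) : Prop :=
  I'.lec = I.lec ∧ I'.c = I.c ∧ I'.d = I.d ∧ I'.acc = I.acc ∧
  StrictPrefs I' ∧
  (∀ (s : S) (p q : P), I.sPref s p q → ¬I.sPref s q p →
    I'.sPref s p q ∧ ¬I'.sPref s q p) ∧
  (∀ (k : L) (t t' : S), I.lPref k t t' → ¬I.lPref k t' t →
    I'.lPref k t t' ∧ ¬I'.lPref k t' t)

end SPAST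


section AuxiliaryLemmas

open SPAST

variable {S P L : Type} [Fintype S] [Fintype P] [Fintype L]
  [DecidableEq S] [DecidableEq P] [DecidableEq L]

private lemma sdiff_card_le' {α : Type*} [DecidableEq α] {A B : Finset α} (h : A.card ≤ B.card) :
    (A \ B).card ≤ (B \ A).card := by
  have h1 := Finset.card_sdiff_add_card_inter A B
  have h2 := Finset.card_sdiff_add_card_inter B A
  rw [Finset.inter_comm] at h2
  omega

/-- A least-preferred element exists in any nonempty finite set of relevant students. -/
private lemma exists_worst (I : SPAST S P L) (k : L) :
    ∀ T : Finset S, (∀ t ∈ T, ∃ p ∈ I.acc t, I.lec p = k) → T.Nonempty →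
      ∃ t₀ ∈ T, ∀ t ∈ T, I.lPref k t t₀ := by
  intro T
  induction T using Finset.induction_on with
  | empty => intro _ h; exact absurd h (by simp)
  | @insert a T' ha ih =>
    intro hok _
    by_cases hT' : T'.Nonempty
    · obtain ⟨t₀, ht₀T, ht₀⟩ := ih (fun t ht => hok t (Finset.mem_insert_of_mem ht)) hT'
      have oka := hok a (Finset.mem_insert_self _ _)
      have okt := hok t₀ (Finset.mem_insert_of_mem ht₀T)
      rcases I.lTotal k a t₀ oka okt with h | h
      · refine ⟨t₀, Finset.mem_insert_of_mem ht₀T, fun t ht => ?_⟩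
        rcases Finset.mem_insert.1 ht with rfl | ht
        · exact h
        · exact ht₀ t ht
      · refine ⟨a, Finset.mem_insert_self _ _, fun t ht => ?_⟩
        rcases Finset.mem_insert.1 ht with rfl | ht
        · exact I.lRefl k t oka
        · exact I.lTrans k t t₀ a (hok t (Finset.mem_insert_of_mem ht)) okt oka (ht₀ t ht) h
    · have hT'e : T' = ∅ := Finset.not_nonempty_iff_eq_empty.1 hT'
      subst hT'e
      refine ⟨a, by simp, fun t ht => ?_⟩
      have : t = a := by simpa using ht
      subst this
      exact I.lRefl k t (hok t (by simp))

private lemma projAsg_card (N : Finset (S × P)) (p : P) :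
    (projAsg N p).card = (N.filter (fun e => e.2 = p)).card := by
  apply Finset.card_image_of_injOn
  intro e he f hf h
  have he' := Finset.mem_filter.1 he
  have hf' := Finset.mem_filter.1 hf
  exact Prod.ext h (he'.2.trans hf'.2.symm)

private lemma lecAsg_card (I : SPAST S P L) (N : Finset (S × P))
    (hu : ∀ s p q, (s, p) ∈ N → (s, q) ∈ N → p = q) (k : L) :
    (lecAsg I N k).card = (N.filter (fun e => I.lec e.2 = k)).card := by
  apply Finset.card_image_of_injOn
  intro e he f hf h
  have he' := Finset.mem_filter.1 he
  have hf' := Finset.mem_filter.1 hf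
  refine Prod.ext h (hu e.1 e.2 f.2 (by rw [Prod.mk.eta]; exact he'.1) ?_)
  rw [h, Prod.mk.eta]; exact hf'.1

/-- Domination facts from super-stability. -/
private lemma sdom (I : SPAST S P L) (M : Finset (S × P)) (hM : SuperStable I M)
    (x : S) (a : P) (hacc : a ∈ I.acc x) (hxa : (x, a) ∉ M)
    (hcond : ∀ p, (x, p) ∈ M → ¬(I.sPref x p a ∧ ¬ I.sPref x a p)) :
    ((M.filter (fun f => f.2 = a)).card = I.c a ∧
       ∀ f ∈ M.filter (fun f => f.2 = a),
         I.lPref (I.lec a) f.1 x ∧ ¬ I.lPref (I.lec a) x f.1)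
  ∨ ((M.filter (fun f => I.lec f.2 = I.lec a)).card = I.d (I.lec a) ∧
       ∀ f ∈ M.filter (fun f => I.lec f.2 = I.lec a),
         I.lPref (I.lec a) f.1 x ∧ ¬ I.lPref (I.lec a) x f.1) := by
  classical
  have hnb := hM.2 x a
  have hmatch := hM.1
  have hpcard : (projAsg M a).card = (M.filter (fun f => f.2 = a)).card := projAsg_card M a
  have hkcard : (lecAsg I M (I.lec a)).card =
      (M.filter (fun f => I.lec f.2 = I.lec a)).card := lecAsg_card I M hmatch.2.1 _
  have hxk : ∃ p ∈ I.acc x, I.lec p = I.lec a := ⟨a, hacc, rfl⟩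
  by_cases hfull : (projAsg M a).card = I.c a
  · left
    have hne : (projAsg M a).Nonempty := by
      rw [← Finset.card_pos, hfull]; exact I.cpos a
    have hokT : ∀ t ∈ projAsg M a, ∃ p ∈ I.acc t, I.lec p = I.lec a := by
      intro t ht
      obtain ⟨e, he, rfl⟩ := Finset.mem_image.1 ht
      have he' := Finset.mem_filter.1 he
      exact ⟨e.2, hmatch.1 e he'.1, by rw [he'.2]⟩
    obtain ⟨t₀, ht₀T, hworst⟩ := exists_worst I (I.lec a) _ hokT hne
    have hnxt : ¬ I.lPref (I.lec a) x t₀ := by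
      intro hpr
      exact hnb ⟨hacc, hxa, hcond, Or.inr (Or.inr ⟨hfull, t₀, ⟨ht₀T, hworst⟩, hpr⟩)⟩
    have hokt₀ := hokT t₀ ht₀T
    have ht₀x : I.lPref (I.lec a) t₀ x := (I.lTotal _ x t₀ hxk hokt₀).resolve_left hnxt
    refine ⟨by rw [← hpcard]; exact hfull, fun f hf => ?_⟩
    have hfT : f.1 ∈ projAsg M a := Finset.mem_image.2 ⟨f, hf, rfl⟩
    have hokf := hokT f.1 hfT
    have hft₀ : I.lPref (I.lec a) f.1 t₀ := hworst f.1 hfT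
    exact ⟨I.lTrans _ f.1 t₀ x hokf hokt₀ hxk hft₀ ht₀x,
      fun hxf => hnxt (I.lTrans _ x f.1 t₀ hxk hokf hokt₀ hxf hft₀)⟩
  · right
    have hlt : (projAsg M a).card < I.c a :=
      lt_of_le_of_ne (by rw [hpcard]; exact hmatch.2.2.1 a) hfull
    have hkfull : (lecAsg I M (I.lec a)).card = I.d (I.lec a) := by
      by_contra hne
      have hklt : (lecAsg I M (I.lec a)).card < I.d (I.lec a) :=
        lt_of_le_of_ne (by rw [hkcard]; exact hmatch.2.2.2 _) hne
      exact hnb ⟨hacc, hxa, hcond, Or.inl ⟨hlt, hklt⟩⟩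
    have hne : (lecAsg I M (I.lec a)).Nonempty := by
      rw [← Finset.card_pos, hkfull]; exact I.dpos _
    have hokT : ∀ t ∈ lecAsg I M (I.lec a), ∃ p ∈ I.acc t, I.lec p = I.lec a := by
      intro t ht
      obtain ⟨e, he, rfl⟩ := Finset.mem_image.1 ht
      have he' := Finset.mem_filter.1 he
      exact ⟨e.2, hmatch.1 e he'.1, he'.2⟩
    obtain ⟨t₀, ht₀T, hworst⟩ := exists_worst I (I.lec a) _ hokT hne
    have hnxt : ¬ I.lPref (I.lec a) x t₀ := by
      intro hpr
      exact hnb ⟨hacc, hxa, hcond,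
        Or.inr (Or.inl ⟨hlt, hkfull, Or.inr ⟨t₀, ⟨ht₀T, hworst⟩, hpr⟩⟩)⟩
    have hokt₀ := hokT t₀ ht₀T
    have ht₀x : I.lPref (I.lec a) t₀ x := (I.lTotal _ x t₀ hxk hokt₀).resolve_left hnxt
    refine ⟨by rw [← hkcard]; exact hkfull, fun f hf => ?_⟩
    have hfT : f.1 ∈ lecAsg I M (I.lec a) := Finset.mem_image.2 ⟨f, hf, rfl⟩
    have hokf := hokT f.1 hfT
    have hft₀ : I.lPref (I.lec a) f.1 t₀ := hworst f.1 hfT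
    exact ⟨I.lTrans _ f.1 t₀ x hokf hokt₀ hxk hft₀ ht₀x,
      fun hxf => hnxt (I.lTrans _ x f.1 t₀ hxk hokf hokt₀ hxf hft₀)⟩

/-- Domination facts from weak stability. -/
private lemma wdom (I : SPAST S P L) (M' : Finset (S × P)) (hM' : WeaklyStable I M')
    (x : S) (a : P) (hacc : a ∈ I.acc x) (hxa : (x, a) ∉ M')
    (hcond : ∀ q, (x, q) ∈ M' → I.sPref x a q ∧ ¬ I.sPref x q a) :
    ((M'.filter (fun f => f.2 = a)).card = I.c a ∧
       ∀ f ∈ M'.filter (fun f => f.2 = a), I.lPref (I.lec a) f.1 x)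
  ∨ ((M'.filter (fun f => I.lec f.2 = I.lec a)).card = I.d (I.lec a) ∧
       ∀ f ∈ M'.filter (fun f => I.lec f.2 = I.lec a), I.lPref (I.lec a) f.1 x) := by
  classical
  have hnb := hM'.2 x a
  have hmatch := hM'.1
  have hpcard : (projAsg M' a).card = (M'.filter (fun f => f.2 = a)).card := projAsg_card M' a
  have hkcard : (lecAsg I M' (I.lec a)).card =
      (M'.filter (fun f => I.lec f.2 = I.lec a)).card := lecAsg_card I M' hmatch.2.1 _
  have hxk : ∃ p ∈ I.acc x, I.lec p = I.lec a := ⟨a, hacc, rfl⟩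
  by_cases hfull : (projAsg M' a).card = I.c a
  · left
    have hne : (projAsg M' a).Nonempty := by
      rw [← Finset.card_pos, hfull]; exact I.cpos a
    have hokT : ∀ t ∈ projAsg M' a, ∃ p ∈ I.acc t, I.lec p = I.lec a := by
      intro t ht
      obtain ⟨e, he, rfl⟩ := Finset.mem_image.1 ht
      have he' := Finset.mem_filter.1 he
      exact ⟨e.2, hmatch.1 e he'.1, by rw [he'.2]⟩
    obtain ⟨t₀, ht₀T, hworst⟩ := exists_worst I (I.lec a) _ hokT hne
    have hnxt : ¬ (I.lPref (I.lec a) x t₀ ∧ ¬ I.lPref (I.lec a) t₀ x) := by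
      intro hpr
      exact hnb ⟨hacc, hxa, hcond, Or.inr (Or.inr ⟨hfull, t₀, ⟨ht₀T, hworst⟩, hpr⟩)⟩
    have hokt₀ := hokT t₀ ht₀T
    have ht₀x : I.lPref (I.lec a) t₀ x := by
      rcases I.lTotal _ t₀ x hokt₀ hxk with h | h
      · exact h
      · by_contra hno
        exact hnxt ⟨h, hno⟩
    refine ⟨by rw [← hpcard]; exact hfull, fun f hf => ?_⟩
    have hfT : f.1 ∈ projAsg M' a := Finset.mem_image.2 ⟨f, hf, rfl⟩
    exact I.lTrans _ f.1 t₀ x (hokT f.1 hfT) hokt₀ hxk (hworst f.1 hfT) ht₀x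
  · right
    have hlt : (projAsg M' a).card < I.c a :=
      lt_of_le_of_ne (by rw [hpcard]; exact hmatch.2.2.1 a) hfull
    have hkfull : (lecAsg I M' (I.lec a)).card = I.d (I.lec a) := by
      by_contra hne
      have hklt : (lecAsg I M' (I.lec a)).card < I.d (I.lec a) :=
        lt_of_le_of_ne (by rw [hkcard]; exact hmatch.2.2.2 _) hne
      exact hnb ⟨hacc, hxa, hcond, Or.inl ⟨hlt, hklt⟩⟩
    have hne : (lecAsg I M' (I.lec a)).Nonempty := by
      rw [← Finset.card_pos, hkfull]; exact I.dpos _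
    have hokT : ∀ t ∈ lecAsg I M' (I.lec a), ∃ p ∈ I.acc t, I.lec p = I.lec a := by
      intro t ht
      obtain ⟨e, he, rfl⟩ := Finset.mem_image.1 ht
      have he' := Finset.mem_filter.1 he
      exact ⟨e.2, hmatch.1 e he'.1, he'.2⟩
    obtain ⟨t₀, ht₀T, hworst⟩ := exists_worst I (I.lec a) _ hokT hne
    have hnxt : ¬ (I.lPref (I.lec a) x t₀ ∧ ¬ I.lPref (I.lec a) t₀ x) := by
      intro hpr
      exact hnb ⟨hacc, hxa, hcond,
        Or.inr (Or.inl ⟨hlt, hkfull, Or.inr ⟨t₀, ⟨ht₀T, hworst⟩, hpr⟩⟩)⟩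
    have hokt₀ := hokT t₀ ht₀T
    have ht₀x : I.lPref (I.lec a) t₀ x := by
      rcases I.lTotal _ t₀ x hokt₀ hxk with h | h
      · exact h
      · by_contra hno
        exact hnxt ⟨h, hno⟩
    refine ⟨by rw [← hkcard]; exact hkfull, fun f hf => ?_⟩
    have hfT : f.1 ∈ lecAsg I M' (I.lec a) := Finset.mem_image.2 ⟨f, hf, rfl⟩
    exact I.lTrans _ f.1 t₀ x (hokT f.1 hfT) hokt₀ hxk (hworst f.1 hfT) ht₀x


/-- Abstract counting core: under the domination structure extracted from
super-stability (strict side, `D₁` over `N₁`) and weak stability (weak side,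
`D₂` over `N₂`), every student matched in `N₂` is matched in `N₁`. -/
private theorem spa_core
    (lecf : P → L) (c : P → ℕ) (d : L → ℕ)
    (N₁ N₂ : Finset (S × P))
    (h1u : ∀ s p q, (s, p) ∈ N₁ → (s, q) ∈ N₁ → p = q)
    (h1c : ∀ p, (N₁.filter (fun e => e.2 = p)).card ≤ c p)
    (h2c : ∀ p, (N₂.filter (fun e => e.2 = p)).card ≤ c p)
    (h2k : ∀ k, (N₂.filter (fun e => lecf e.2 = k)).card ≤ d k)
    (D₁ D₂ : L → S → S → Prop)
    (hD : ∀ k x y, D₁ k x y → D₂ k y x → False)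
    (isRB : S → Prop)
    (hRA : ∀ e ∈ N₂ \ N₁, ¬ isRB e.1 →
        ((N₁.filter (fun f => f.2 = e.2)).card = c e.2 ∧
          ∀ f ∈ N₁.filter (fun f => f.2 = e.2), D₁ (lecf e.2) f.1 e.1) ∨
        ((N₁.filter (fun f => lecf f.2 = lecf e.2)).card = d (lecf e.2) ∧
          ∀ f ∈ N₁.filter (fun f => lecf f.2 = lecf e.2), D₁ (lecf e.2) f.1 e.1))
    (hRB : ∀ e ∈ N₁ \ N₂, isRB e.1 →
        ((N₂.filter (fun f => f.2 = e.2)).card = c e.2 ∧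
          ∀ f ∈ N₂.filter (fun f => f.2 = e.2), D₂ (lecf e.2) f.1 e.1) ∨
        ((N₂.filter (fun f => lecf f.2 = lecf e.2)).card = d (lecf e.2) ∧
          ∀ f ∈ N₂.filter (fun f => lecf f.2 = lecf e.2), D₂ (lecf e.2) f.1 e.1))
    (hBA : ∀ e ∈ N₁ \ N₂, ¬ isRB e.1 → ∃ p, (e.1, p) ∈ N₂)
    (hAB : ∀ e ∈ N₂ \ N₁, isRB e.1 → ∃ p, (e.1, p) ∈ N₁) :
    ∀ s p, (s, p) ∈ N₂ → ∃ q, (s, q) ∈ N₁ := by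
  classical
  -- the set of "A-site" lecturers and projects
  set Alec : Finset L := Finset.univ.filter (fun k => ∃ e ∈ N₂ \ N₁, ¬ isRB e.1 ∧ lecf e.2 = k ∧
      (N₁.filter (fun f => lecf f.2 = k)).card = d k ∧
      ∀ f ∈ N₁.filter (fun f => lecf f.2 = k), D₁ k f.1 e.1) with hAlecDef
  set Aproj : Finset P := Finset.univ.filter (fun p => lecf p ∉ Alec ∧ ∃ e ∈ N₂ \ N₁, ¬ isRB e.1 ∧ e.2 = p ∧
      (N₁.filter (fun f => f.2 = p)).card = c p ∧
      ∀ f ∈ N₁.filter (fun f => f.2 = p), D₁ (lecf p) f.1 e.1) with hAprojDef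
  have hAlecMem : ∀ k ∈ Alec, ∃ e ∈ N₂ \ N₁, ¬ isRB e.1 ∧ lecf e.2 = k ∧
      (N₁.filter (fun f => lecf f.2 = k)).card = d k ∧
      ∀ f ∈ N₁.filter (fun f => lecf f.2 = k), D₁ k f.1 e.1 := by
    intro k hk
    rw [hAlecDef] at hk
    exact (Finset.mem_filter.1 hk).2
  have hAprojMem : ∀ p ∈ Aproj, lecf p ∉ Alec ∧ ∃ e ∈ N₂ \ N₁, ¬ isRB e.1 ∧ e.2 = p ∧
      (N₁.filter (fun f => f.2 = p)).card = c p ∧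
      ∀ f ∈ N₁.filter (fun f => f.2 = p), D₁ (lecf p) f.1 e.1 := by
    intro p hp
    rw [hAprojDef] at hp
    exact (Finset.mem_filter.1 hp).2
  set L₁ : Finset (S × P) := (N₂ \ N₁).filter (fun e => lecf e.2 ∈ Alec ∨ e.2 ∈ Aproj) with hL₁Def
  set R₁ : Finset (S × P) := (N₁ \ N₂).filter (fun e => lecf e.2 ∈ Alec ∨ e.2 ∈ Aproj) with hR₁Def
  set RA : Finset (S × P) := (N₂ \ N₁).filter (fun e => ¬ isRB e.1) with hRADef
  set EE : Finset (S × P) := L₁.filter (fun e => isRB e.1) with hEEDef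
  set Q₁ : Finset (S × P) := R₁.filter (fun e => ¬ isRB e.1) with hQ₁Def
  set Sw : Finset (S × P) := R₁.filter (fun e => isRB e.1) with hSwDef
  -- every RA-pair lies at an A-place
  have hRAsub : RA ⊆ L₁ := by
    intro e he
    rw [hRADef] at he
    obtain ⟨heF, hni⟩ := Finset.mem_filter.1 he
    rw [hL₁Def]
    rcases hRA e heF hni with hP | hL
    · by_cases hk : lecf e.2 ∈ Alec
      · exact Finset.mem_filter.2 ⟨heF, Or.inl hk⟩
      · refine Finset.mem_filter.2 ⟨heF, Or.inr ?_⟩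
        rw [hAprojDef]
        exact Finset.mem_filter.2 ⟨Finset.mem_univ _, hk, e, heF, hni, rfl, hP.1, hP.2⟩
    · refine Finset.mem_filter.2 ⟨heF, Or.inl ?_⟩
      rw [hAlecDef]
      exact Finset.mem_filter.2 ⟨Finset.mem_univ _, e, heF, hni, rfl, hL.1, hL.2⟩
  -- Step 1 : L₁.card ≤ R₁.card (place-by-place counting)
  have hstep1 : L₁.card ≤ R₁.card := by
    have e1 : L₁.card = ∑ k ∈ Finset.univ, (L₁.filter (fun e => lecf e.2 = k)).card :=
      Finset.card_eq_sum_card_fiberwise (fun x _ => Finset.mem_univ _)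
    have e2 : R₁.card = ∑ k ∈ Finset.univ, (R₁.filter (fun e => lecf e.2 = k)).card :=
      Finset.card_eq_sum_card_fiberwise (fun x _ => Finset.mem_univ _)
    rw [e1, e2]
    apply Finset.sum_le_sum
    intro k _
    by_cases hk : k ∈ Alec
    · -- lecturer-level place
      have hLk : L₁.filter (fun e => lecf e.2 = k)
          = (N₂.filter (fun e => lecf e.2 = k)) \ (N₁.filter (fun e => lecf e.2 = k)) := by
        ext e
        rw [hL₁Def]
        simp only [Finset.mem_filter, Finset.mem_sdiff]
        constructor
        · rintro ⟨⟨⟨h2, h1⟩, -⟩, hl⟩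
          exact ⟨⟨h2, hl⟩, fun hc => h1 hc.1⟩
        · rintro ⟨⟨h2, hl⟩, h1⟩
          exact ⟨⟨⟨h2, fun hc => h1 ⟨hc, hl⟩⟩, Or.inl (by rwa [hl])⟩, hl⟩
      have hRk : R₁.filter (fun e => lecf e.2 = k)
          = (N₁.filter (fun e => lecf e.2 = k)) \ (N₂.filter (fun e => lecf e.2 = k)) := by
        ext e
        rw [hR₁Def]
        simp only [Finset.mem_filter, Finset.mem_sdiff]
        constructor
        · rintro ⟨⟨⟨h1, h2⟩, -⟩, hl⟩
          exact ⟨⟨h1, hl⟩, fun hc => h2 hc.1⟩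
        · rintro ⟨⟨h1, hl⟩, h2⟩
          exact ⟨⟨⟨h1, fun hc => h2 ⟨hc, hl⟩⟩, Or.inl (by rwa [hl])⟩, hl⟩
      rw [hLk, hRk]
      apply sdiff_card_le'
      obtain ⟨e₀, -, -, -, hful, -⟩ := hAlecMem k hk
      calc (N₂.filter (fun e => lecf e.2 = k)).card ≤ d k := h2k k
        _ = (N₁.filter (fun e => lecf e.2 = k)).card := hful.symm
    · -- project-level places within a non-A lecturer
      have e3 : (L₁.filter (fun e => lecf e.2 = k)).card
          = ∑ p ∈ Finset.univ, ((L₁.filter (fun e => lecf e.2 = k)).filter (fun e => e.2 = p)).card :=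
        Finset.card_eq_sum_card_fiberwise (fun x _ => Finset.mem_univ _)
      have e4 : (R₁.filter (fun e => lecf e.2 = k)).card
          = ∑ p ∈ Finset.univ, ((R₁.filter (fun e => lecf e.2 = k)).filter (fun e => e.2 = p)).card :=
        Finset.card_eq_sum_card_fiberwise (fun x _ => Finset.mem_univ _)
      rw [e3, e4]
      apply Finset.sum_le_sum
      intro p _
      by_cases hp : p ∈ Aproj ∧ lecf p = k
      · have hLp : (L₁.filter (fun e => lecf e.2 = k)).filter (fun e => e.2 = p)
            = (N₂.filter (fun e => e.2 = p)) \ (N₁.filter (fun e => e.2 = p)) := by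
          ext e
          rw [hL₁Def]
          simp only [Finset.mem_filter, Finset.mem_sdiff]
          constructor
          · rintro ⟨⟨⟨⟨h2, h1⟩, -⟩, -⟩, hep⟩
            exact ⟨⟨h2, hep⟩, fun hc => h1 hc.1⟩
          · rintro ⟨⟨h2, hep⟩, h1⟩
            exact ⟨⟨⟨⟨h2, fun hc => h1 ⟨hc, hep⟩⟩, Or.inr (by rw [hep]; exact hp.1)⟩,
              by rw [hep, hp.2]⟩, hep⟩
        have hRp : (R₁.filter (fun e => lecf e.2 = k)).filter (fun e => e.2 = p)
            = (N₁.filter (fun e => e.2 = p)) \ (N₂.filter (fun e => e.2 = p)) := by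
          ext e
          rw [hR₁Def]
          simp only [Finset.mem_filter, Finset.mem_sdiff]
          constructor
          · rintro ⟨⟨⟨⟨h1, h2⟩, -⟩, -⟩, hep⟩
            exact ⟨⟨h1, hep⟩, fun hc => h2 hc.1⟩
          · rintro ⟨⟨h1, hep⟩, h2⟩
            exact ⟨⟨⟨⟨h1, fun hc => h2 ⟨hc, hep⟩⟩, Or.inr (by rw [hep]; exact hp.1)⟩,
              by rw [hep, hp.2]⟩, hep⟩
        rw [hLp, hRp]
        apply sdiff_card_le'
        obtain ⟨-, e₀, -, -, -, hful, -⟩ := hAprojMem p hp.1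
        calc (N₂.filter (fun e => e.2 = p)).card ≤ c p := h2c p
          _ = (N₁.filter (fun e => e.2 = p)).card := hful.symm
      · have hempty : (L₁.filter (fun e => lecf e.2 = k)).filter (fun e => e.2 = p) = ∅ := by
          rw [Finset.eq_empty_iff_forall_notMem]
          intro e he
          obtain ⟨he', hep⟩ := Finset.mem_filter.1 he
          obtain ⟨heL, hel⟩ := Finset.mem_filter.1 he'
          rw [hL₁Def] at heL
          obtain ⟨-, hOK⟩ := Finset.mem_filter.1 heL
          rcases hOK with h | h
          · rw [hep] at h hel
            rw [hel] at h
            exact hk h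
          · rw [hep] at h hel
            exact hp ⟨h, hel⟩
        rw [hempty]
        simp
  -- splitting L₁ and R₁
  have hsplitL : EE.card + RA.card = L₁.card := by
    have h1 : L₁.filter (fun e => ¬ isRB e.1) = RA := by
      apply Finset.Subset.antisymm
      · intro e he
        obtain ⟨heL, hni⟩ := Finset.mem_filter.1 he
        rw [hL₁Def] at heL
        rw [hRADef]
        exact Finset.mem_filter.2 ⟨(Finset.mem_filter.1 heL).1, hni⟩
      · intro e he
        refine Finset.mem_filter.2 ⟨hRAsub he, ?_⟩
        rw [hRADef] at he
        exact (Finset.mem_filter.1 he).2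
    have := Finset.card_filter_add_card_filter_not (s := L₁) (p := fun e => isRB e.1)
    rw [h1] at this
    exact this
  have hsplitR : Sw.card + Q₁.card = R₁.card := by
    have := Finset.card_filter_add_card_filter_not (s := R₁) (p := fun e => isRB e.1)
    rw [hSwDef, hQ₁Def]
    exact this
  -- Q₁ injects into the both-matched RA pairs
  set ABA : Finset (S × P) := RA.filter (fun e => ∃ q, (e.1, q) ∈ N₁) with hABADef
  have hQA : Q₁.card ≤ ABA.card := by
    apply Finset.card_le_card_of_injOn
      (f := fun e => (e.1, if h : ∃ p, (e.1, p) ∈ N₂ then h.choose else e.2))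
    · intro e he
      rw [hQ₁Def] at he
      obtain ⟨heR₁, hni⟩ := Finset.mem_filter.1 he
      rw [hR₁Def] at heR₁
      have heF₁ : e ∈ N₁ \ N₂ := (Finset.mem_filter.1 heR₁).1
      obtain ⟨heN₁, heN₂⟩ := Finset.mem_sdiff.1 heF₁
      have hex : ∃ p, (e.1, p) ∈ N₂ := hBA e heF₁ hni
      simp only [Finset.mem_coe]
      rw [dif_pos hex]
      have hmem2 : (e.1, hex.choose) ∈ N₂ := hex.choose_spec
      have hne1 : (e.1, hex.choose) ∉ N₁ := by
        intro hc
        have h2 : hex.choose = e.2 := h1u e.1 _ _ hc (by rw [Prod.mk.eta]; exact heN₁)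
        rw [h2, Prod.mk.eta] at hmem2
        exact heN₂ hmem2
      rw [hABADef]
      refine Finset.mem_filter.2 ⟨?_, ⟨e.2, heN₁⟩⟩
      rw [hRADef]
      refine Finset.mem_filter.2 ⟨Finset.mem_sdiff.2 ⟨hmem2, hne1⟩, ?_⟩
      exact hni
    · intro e he f hf hef
      have hfst : e.1 = f.1 := by simpa using congrArg Prod.fst hef
      have heN₁ : e ∈ N₁ := by
        rw [hQ₁Def] at he
        have := (Finset.mem_filter.1 he).1
        rw [hR₁Def] at this
        exact (Finset.mem_sdiff.1 (Finset.mem_filter.1 this).1).1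
      have hfN₁ : f ∈ N₁ := by
        rw [hQ₁Def] at hf
        have := (Finset.mem_filter.1 hf).1
        rw [hR₁Def] at this
        exact (Finset.mem_sdiff.1 (Finset.mem_filter.1 this).1).1
      refine Prod.ext hfst (h1u e.1 e.2 f.2 (by rw [Prod.mk.eta]; exact heN₁) ?_)
      rw [hfst, Prod.mk.eta]
      exact hfN₁
  -- the switch pairs inject into the RB pairs of L₁
  have hSwE : Sw.card ≤ EE.card := by
    have e1 : Sw.card = ∑ p ∈ Finset.univ, (Sw.filter (fun e => e.2 = p)).card :=
      Finset.card_eq_sum_card_fiberwise (fun x _ => Finset.mem_univ _)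
    have e2 : EE.card = ∑ p ∈ Finset.univ, (EE.filter (fun e => e.2 = p)).card :=
      Finset.card_eq_sum_card_fiberwise (fun x _ => Finset.mem_univ _)
    rw [e1, e2]
    apply Finset.sum_le_sum
    intro p _
    rcases Finset.eq_empty_or_nonempty (Sw.filter (fun e => e.2 = p)) with hemp | ⟨e₀, he₀⟩
    · rw [hemp]; simp
    · obtain ⟨he₀Sw, he₀p⟩ := Finset.mem_filter.1 he₀
      rw [hSwDef] at he₀Sw
      obtain ⟨he₀R₁, he₀RB⟩ := Finset.mem_filter.1 he₀Sw
      rw [hR₁Def] at he₀R₁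
      obtain ⟨he₀F₁, he₀OK⟩ := Finset.mem_filter.1 he₀R₁
      obtain ⟨he₀N₁, he₀N₂⟩ := Finset.mem_sdiff.1 he₀F₁
      -- p is not an A-project
      have hpA : p ∉ Aproj := by
        intro hp
        obtain ⟨-, ep, hepF, -, hepp, -, hdomp⟩ := hAprojMem p hp
        have hd1 : D₁ (lecf p) e₀.1 ep.1 :=
          hdomp e₀ (Finset.mem_filter.2 ⟨he₀N₁, he₀p⟩)
        rcases hRB e₀ he₀F₁ he₀RB with ⟨-, hdom⟩ | ⟨-, hdom⟩
        · have hd2 : D₂ (lecf e₀.2) ep.1 e₀.1 :=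
            hdom ep (Finset.mem_filter.2 ⟨(Finset.mem_sdiff.1 hepF).1, by rw [hepp, he₀p]⟩)
          rw [he₀p] at hd2
          exact hD _ _ _ hd1 hd2
        · have hd2 : D₂ (lecf e₀.2) ep.1 e₀.1 :=
            hdom ep (Finset.mem_filter.2 ⟨(Finset.mem_sdiff.1 hepF).1, by rw [hepp, he₀p]⟩)
          rw [he₀p] at hd2
          exact hD _ _ _ hd1 hd2
      have hkA : lecf p ∈ Alec := by
        rcases he₀OK with h | h
        · rwa [he₀p] at h
        · rw [he₀p] at h
          exact absurd h hpA
      obtain ⟨ek, hekF, -, heklec, hfulk, hdomk⟩ := hAlecMem (lecf p) hkA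
      -- every pair of Sw over p has its project full in N₂, with weak domination
      have hU : ∀ e ∈ Sw.filter (fun e => e.2 = p),
          (N₂.filter (fun f => f.2 = p)).card = c p ∧
          ∀ f ∈ N₂.filter (fun f => f.2 = p), D₂ (lecf p) f.1 e.1 := by
        intro e he
        obtain ⟨heSw, hep⟩ := Finset.mem_filter.1 he
        rw [hSwDef] at heSw
        obtain ⟨heR₁, heRB⟩ := Finset.mem_filter.1 heSw
        rw [hR₁Def] at heR₁
        have heF₁ : e ∈ N₁ \ N₂ := (Finset.mem_filter.1 heR₁).1
        rcases hRB e heF₁ heRB with ⟨hful, hdom⟩ | ⟨-, hdom⟩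
        · constructor
          · rw [hep] at hful; exact hful
          · intro f hf
            have hf' := Finset.mem_filter.1 hf
            have := hdom f (Finset.mem_filter.2 ⟨hf'.1, by rw [hf'.2, hep]⟩)
            rwa [hep] at this
        · exfalso
          have hd2 : D₂ (lecf e.2) ek.1 e.1 :=
            hdom ek (Finset.mem_filter.2 ⟨(Finset.mem_sdiff.1 hekF).1, by rw [heklec, hep]⟩)
          have hd1 : D₁ (lecf p) e.1 ek.1 :=
            hdomk e (Finset.mem_filter.2 ⟨(Finset.mem_sdiff.1 heF₁).1, by rw [hep]⟩)
          rw [hep] at hd2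
          exact hD _ _ _ hd1 hd2
      have hU₀ := hU e₀ he₀
      -- the difference N₂ᵖ \ N₁ᵖ consists of RB pairs of L₁
      have hsubE : (N₂.filter (fun f => f.2 = p)) \ (N₁.filter (fun f => f.2 = p))
          ⊆ EE.filter (fun e => e.2 = p) := by
        intro f hf
        obtain ⟨hf2, hf1⟩ := Finset.mem_sdiff.1 hf
        obtain ⟨hfN₂, hfp⟩ := Finset.mem_filter.1 hf2
        have hfn1 : f ∉ N₁ := fun hc => hf1 (Finset.mem_filter.2 ⟨hc, hfp⟩)
        have hfF₂ : f ∈ N₂ \ N₁ := Finset.mem_sdiff.2 ⟨hfN₂, hfn1⟩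
        have hfRB : isRB f.1 := by
          by_contra hn
          have hd2 : D₂ (lecf p) f.1 e₀.1 := hU₀.2 f hf2
          rcases hRA f hfF₂ hn with ⟨-, hdom⟩ | ⟨-, hdom⟩
          · have hd1 : D₁ (lecf f.2) e₀.1 f.1 :=
              hdom e₀ (Finset.mem_filter.2 ⟨he₀N₁, he₀p.trans hfp.symm⟩)
            rw [hfp] at hd1
            exact hD _ _ _ hd1 hd2
          · have hd1 : D₁ (lecf f.2) e₀.1 f.1 :=
              hdom e₀ (Finset.mem_filter.2 ⟨he₀N₁, by rw [he₀p, hfp]⟩)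
            rw [hfp] at hd1
            exact hD _ _ _ hd1 hd2
        refine Finset.mem_filter.2 ⟨?_, hfp⟩
        rw [hEEDef]
        refine Finset.mem_filter.2 ⟨?_, hfRB⟩
        rw [hL₁Def]
        exact Finset.mem_filter.2 ⟨hfF₂, Or.inl (by rwa [hfp])⟩
      -- cardinalities
      have hc1 : (Sw.filter (fun e => e.2 = p)).card
          ≤ ((N₁.filter (fun f => f.2 = p)) \ (N₂.filter (fun f => f.2 = p))).card := by
        apply Finset.card_le_card
        intro e he
        obtain ⟨heSw, hep⟩ := Finset.mem_filter.1 he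
        rw [hSwDef] at heSw
        have heR₁ := (Finset.mem_filter.1 heSw).1
        rw [hR₁Def] at heR₁
        obtain ⟨heN₁, heN₂⟩ := Finset.mem_sdiff.1 (Finset.mem_filter.1 heR₁).1
        exact Finset.mem_sdiff.2 ⟨Finset.mem_filter.2 ⟨heN₁, hep⟩,
          fun hc => heN₂ (Finset.mem_filter.1 hc).1⟩
      have hc2 : ((N₁.filter (fun f => f.2 = p)) \ (N₂.filter (fun f => f.2 = p))).card
          ≤ ((N₂.filter (fun f => f.2 = p)) \ (N₁.filter (fun f => f.2 = p))).card := by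
        apply sdiff_card_le'
        rw [hU₀.1]
        exact h1c p
      calc (Sw.filter (fun e => e.2 = p)).card
          ≤ ((N₁.filter (fun f => f.2 = p)) \ (N₂.filter (fun f => f.2 = p))).card := hc1
        _ ≤ ((N₂.filter (fun f => f.2 = p)) \ (N₁.filter (fun f => f.2 = p))).card := hc2
        _ ≤ (EE.filter (fun e => e.2 = p)).card := Finset.card_le_card hsubE
  -- conclude : RA = ABA
  have hABAsub : ABA ⊆ RA := by
    rw [hABADef]; exact Finset.filter_subset _ _
  have hcardRA : RA.card ≤ ABA.card := by
    have h := hstep1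
    omega
  have hRAeq : ABA = RA := Finset.eq_of_subset_of_card_le hABAsub hcardRA
  intro s p hsp
  by_cases h1 : (s, p) ∈ N₁
  · exact ⟨p, h1⟩
  · have hF : (s, p) ∈ N₂ \ N₁ := Finset.mem_sdiff.2 ⟨hsp, h1⟩
    by_cases hrb : isRB s
    · exact hAB (s, p) hF hrb
    · have hmem : (s, p) ∈ RA := by
        rw [hRADef]; exact Finset.mem_filter.2 ⟨hF, hrb⟩
      rw [← hRAeq, hABADef] at hmem
      exact (Finset.mem_filter.1 hmem).2

end AuxiliaryLemmas

open SPAST in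
theorem weakly_stable_card_eq_super_stable_card {S P L : Type} [Fintype S] [Fintype P] [Fintype L]
    [DecidableEq S] [DecidableEq P] [DecidableEq L]
    (I : SPAST S P L) (M : Finset (S × P)) (hM : SuperStable I M)
    (M' : Finset (S × P)) (hM' : WeaklyStable I M') :
    M'.card = M.card := by
  classical
  have hu : ∀ s p q, (s, p) ∈ M → (s, q) ∈ M → p = q := hM.1.2.1
  have hu' : ∀ s p q, (s, p) ∈ M' → (s, q) ∈ M' → p = q := hM'.1.2.1
  -- "prefers the M-assignment strictly over the M'-assignment (if any)"
  set prefersM : S → Prop := fun s => ∃ p, (s, p) ∈ M ∧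
      ∀ q, (s, q) ∈ M' → (I.sPref s p q ∧ ¬ I.sPref s q p) with hprefDef
  -- Pass 1 : every student matched in M' is matched in M
  have h21 : ∀ s p, (s, p) ∈ M' → ∃ q, (s, q) ∈ M := by
    refine spa_core I.lec I.c I.d M M' hu (hM.1.2.2.1) (hM'.1.2.2.1) (hM'.1.2.2.2)
      (fun k y x => I.lPref k y x ∧ ¬ I.lPref k x y) (fun k y x => I.lPref k y x)
      (fun k x y h1 h2 => h1.2 h2) prefersM ?_ ?_ ?_ ?_
    · -- hRA
      intro e he hnp
      obtain ⟨heM', heM⟩ := Finset.mem_sdiff.1 he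
      have hacc : e.2 ∈ I.acc e.1 := hM'.1.1 e heM'
      have hxa : (e.1, e.2) ∉ M := by rw [Prod.mk.eta]; exact heM
      have hcond : ∀ p, (e.1, p) ∈ M → ¬(I.sPref e.1 p e.2 ∧ ¬ I.sPref e.1 e.2 p) := by
        intro p hp hstr
        apply hnp
        rw [hprefDef]
        refine ⟨p, hp, fun q hq => ?_⟩
        have hqe : q = e.2 := hu' e.1 q e.2 hq (by rw [Prod.mk.eta]; exact heM')
        rw [hqe]
        exact hstr
      exact sdom I M hM e.1 e.2 hacc hxa hcond
    · -- hRB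
      intro e he hpf
      obtain ⟨heM, heM'⟩ := Finset.mem_sdiff.1 he
      rw [hprefDef] at hpf
      obtain ⟨p, hp, hstr⟩ := hpf
      have hpe : p = e.2 := hu e.1 p e.2 hp (by rw [Prod.mk.eta]; exact heM)
      have hcond : ∀ q, (e.1, q) ∈ M' → I.sPref e.1 e.2 q ∧ ¬ I.sPref e.1 q e.2 := by
        intro q hq
        have := hstr q hq
        rwa [hpe] at this
      exact wdom I M' hM' e.1 e.2 (hM.1.1 e heM) (by rw [Prod.mk.eta]; exact heM') hcond
    · -- hBA
      intro e he hnp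
      obtain ⟨heM, heM'⟩ := Finset.mem_sdiff.1 he
      by_contra hno
      push_neg at hno
      apply hnp
      rw [hprefDef]
      exact ⟨e.2, by rw [Prod.mk.eta]; exact heM, fun q hq => absurd hq (hno q)⟩
    · -- hAB
      intro e he hpf
      rw [hprefDef] at hpf
      exact ⟨hpf.choose, hpf.choose_spec.1⟩
  -- Pass 2 : every student matched in M is matched in M'
  have h12 : ∀ s p, (s, p) ∈ M → ∃ q, (s, q) ∈ M' := by
    refine spa_core I.lec I.c I.d M' M hu' (hM'.1.2.2.1) (hM.1.2.2.1) (hM.1.2.2.2)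
      (fun k y x => I.lPref k y x) (fun k y x => I.lPref k y x ∧ ¬ I.lPref k x y)
      (fun k x y h1 h2 => h2.2 h1) (fun s => (∃ q, (s, q) ∈ M') ∧ ¬ prefersM s) ?_ ?_ ?_ ?_
    · -- hRA (weak dominations over M')
      intro e he hni
      obtain ⟨heM, heM'⟩ := Finset.mem_sdiff.1 he
      have hcond : ∀ q, (e.1, q) ∈ M' → I.sPref e.1 e.2 q ∧ ¬ I.sPref e.1 q e.2 := by
        intro q hq
        by_cases hpf : prefersM e.1
        · rw [hprefDef] at hpf
          obtain ⟨p, hp, hstr⟩ := hpf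
          have hpe : p = e.2 := hu e.1 p e.2 hp (by rw [Prod.mk.eta]; exact heM)
          have := hstr q hq
          rwa [hpe] at this
        · exact absurd ⟨⟨q, hq⟩, hpf⟩ hni
      exact wdom I M' hM' e.1 e.2 (hM.1.1 e heM) (by rw [Prod.mk.eta]; exact heM') hcond
    · -- hRB (strict dominations over M)
      intro e he hi
      obtain ⟨heM', heM⟩ := Finset.mem_sdiff.1 he
      obtain ⟨-, hnp⟩ := hi
      have hcond : ∀ p, (e.1, p) ∈ M → ¬(I.sPref e.1 p e.2 ∧ ¬ I.sPref e.1 e.2 p) := by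
        intro p hp hstr
        apply hnp
        rw [hprefDef]
        refine ⟨p, hp, fun q hq => ?_⟩
        have hqe : q = e.2 := hu' e.1 q e.2 hq (by rw [Prod.mk.eta]; exact heM')
        rw [hqe]
        exact hstr
      exact sdom I M hM e.1 e.2 (hM'.1.1 e heM') (by rw [Prod.mk.eta]; exact heM) hcond
    · -- hBA
      intro e he hni
      obtain ⟨heM', heM⟩ := Finset.mem_sdiff.1 he
      by_cases hpf : prefersM e.1
      · rw [hprefDef] at hpf
        exact ⟨hpf.choose, hpf.choose_spec.1⟩
      · exact absurd ⟨⟨e.2, by rw [Prod.mk.eta]; exact heM'⟩, hpf⟩ hni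
    · -- hAB
      intro e he hi
      exact hi.1
  -- matched sets coincide, hence the cardinalities agree
  have hinj : ∀ (N : Finset (S × P)), (∀ s p q, (s, p) ∈ N → (s, q) ∈ N → p = q) →
      (N.image Prod.fst).card = N.card := by
    intro N hN
    apply Finset.card_image_of_injOn
    intro e he f hf h
    refine Prod.ext h (hN e.1 e.2 f.2 (by rw [Prod.mk.eta]; exact he) ?_)
    rw [h, Prod.mk.eta]
    exact hf
  have himg : M'.image Prod.fst = M.image Prod.fst := by
    ext s
    simp only [Finset.mem_image, Prod.exists]
    constructor
    · rintro ⟨a, b, hab, rfl⟩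
      obtain ⟨q, hq⟩ := h21 a b hab
      exact ⟨a, q, hq, rfl⟩
    · rintro ⟨a, b, hab, rfl⟩
      obtain ⟨q, hq⟩ := h12 a b hab
      exact ⟨a, q, hq, rfl⟩
  calc M'.card = (M'.image Prod.fst).card := (hinj M' hu').symm
    _ = (M.image Prod.fst).card := by rw [himg]
    _ = M.card := hinj M hu
end

section
/- Let I be an instance of SPA-ST. For any two super-stable matchings M1 and M2 in I, a student is unmatched in M1 if and only if she is unmatched in M2. -/
open scoped Classical

namespace SPARH
open SPAST Finset
set_option linter.unusedSectionVars false

variable {S P L : Type} [Fintype S] [Fintype P] [Fintype L]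
  [DecidableEq S] [DecidableEq P] [DecidableEq L]

noncomputable def idxS (s : S) : ℕ := (Fintype.equivFin S) s
noncomputable def idxP (p : P) : ℕ := (Fintype.equivFin P) p
noncomputable def idxL (l : L) : ℕ := (Fintype.equivFin L) l

def BB (S P L : Type) [Fintype S] [Fintype P] [Fintype L] : ℕ :=
  Fintype.card S + Fintype.card P + Fintype.card L + 2

lemma idxS_lt : idxS (S := S) s < BB S P L := by
  have := ((Fintype.equivFin S) s).2
  simp only [BB, idxS]; omega

lemma idxP_lt : idxP (P := P) p < BB S P L := by
  have := ((Fintype.equivFin P) p).2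
  simp only [BB, idxP]; omega

lemma idxL_lt : idxL (L := L) l < BB S P L := by
  have := ((Fintype.equivFin L) l).2
  simp only [BB, idxL]; omega

lemma idxS_inj {s t : S} (h : idxS s = idxS t) : s = t := by
  have := (Fintype.equivFin S).injective (Fin.ext h)
  exact this

lemma idxP_inj {p q : P} (h : idxP p = idxP q) : p = q := by
  exact (Fintype.equivFin P).injective (Fin.ext h)

section Keys

variable (I : SPAST S P L)

def sStr (s : S) (p q : P) : Prop := I.sPref s p q ∧ ¬ I.sPref s q p
def lStr (k : L) (u v : S) : Prop := I.lPref k u v ∧ ¬ I.lPref k v u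
def RelL (k : L) (t : S) : Prop := ∃ p ∈ I.acc t, I.lec p = k

noncomputable def scnt (s : S) (p : P) : ℕ :=
  ((I.acc s).filter (fun r => sStr I s r p)).card

noncomputable def lcnt (k : L) (u : S) : ℕ :=
  (Finset.univ.filter (fun t => RelL I k t ∧ lStr I k t u)).card

noncomputable def skey (e : S × P) : ℕ := scnt I e.1 e.2 * BB S P L + idxP e.2

noncomputable def pkey (e : S × P) : ℕ :=
  (((idxL (I.lec e.2) * BB S P L + lcnt I (I.lec e.2) e.1) * BB S P L
      + idxS e.1) * BB S P L + scnt I e.1 e.2) * BB S P L + idxP e.2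

variable {I}

lemma scnt_lt_B (s : S) (p : P) : scnt I s p < BB S P L := by
  have h1 : ((I.acc s).filter (fun r => sStr I s r p)).card ≤ (I.acc s).card :=
    Finset.card_filter_le _ _
  have h2 : (I.acc s).card ≤ Fintype.card P := Finset.card_le_univ _
  simp only [BB, scnt]; omega

lemma lcnt_lt_B (k : L) (u : S) : lcnt I k u < BB S P L := by
  have h1 : (Finset.univ.filter (fun t => RelL I k t ∧ lStr I k t u)).card ≤ Fintype.card S := by
    simpa using Finset.card_filter_le (Finset.univ : Finset S) _
  simp only [BB, lcnt]; omega

lemma digit_lt {B a b a' b' : ℕ} (hb : b < B) (h : a < a') : a * B + b < a' * B + b' := by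
  have : (a + 1) * B ≤ a' * B := Nat.mul_le_mul_right _ h
  nlinarith

lemma digit_le {B a b a' b' : ℕ} (hb : b < B) (h : a ≤ a') : a * B + b < a' * B + B := by
  have : a * B ≤ a' * B := Nat.mul_le_mul_right _ h
  omega

lemma digit_eq {B a b a' b' : ℕ} (hb : b < B) (hb' : b' < B)
    (h : a * B + b = a' * B + b') : a = a' ∧ b = b' := by
  rcases Nat.lt_trichotomy a a' with hh | hh | hh
  · exact absurd h (Nat.ne_of_lt (digit_lt hb hh))
  · constructor
    · exact hh
    · subst hh; omega
  · exact absurd h.symm (Nat.ne_of_lt (digit_lt hb' hh))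

lemma scnt_lt_of_sStr {s : S} {p q : P} (hp : p ∈ I.acc s) (hq : q ∈ I.acc s)
    (h : sStr I s p q) : scnt I s p < scnt I s q := by
  apply Finset.card_lt_card
  constructor
  · intro r hr
    simp only [Finset.mem_filter] at hr ⊢
    obtain ⟨hracc, hr1, hr2⟩ := hr
    refine ⟨hracc, ?_, ?_⟩
    · exact I.sTrans s r hracc p hp q hq hr1 h.1
    · intro hqr
      exact hr2 (I.sTrans s p hp q hq r hracc h.1 hqr)
  · intro hsub
    have hp' : p ∈ (I.acc s).filter (fun r => sStr I s r q) := by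
      simp only [Finset.mem_filter]; exact ⟨hp, h⟩
    have : p ∈ (I.acc s).filter (fun r => sStr I s r p) := hsub hp'
    simp only [Finset.mem_filter, sStr] at this
    exact (Finset.mem_filter.1 (hsub hp')).2.2 (I.sRefl s p hp)

lemma lcnt_lt_of_lStr {k : L} {u v : S} (hu : RelL I k u) (hv : RelL I k v)
    (h : lStr I k u v) : lcnt I k u < lcnt I k v := by
  apply Finset.card_lt_card
  constructor
  · intro t ht
    simp only [Finset.mem_filter] at ht ⊢
    obtain ⟨htuniv, htrel, ht1, ht2⟩ := ht
    refine ⟨htuniv, htrel, ?_, ?_⟩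
    · exact I.lTrans k t u v htrel hu hv ht1 h.1
    · intro hvt
      exact h.2 (I.lTrans k v t u hv htrel hu hvt ht1)
  · intro hsub
    have hu' : u ∈ Finset.univ.filter (fun t => RelL I k t ∧ lStr I k t v) := by
      simp only [Finset.mem_filter]; exact ⟨Finset.mem_univ _, hu, h⟩
    have : u ∈ Finset.univ.filter (fun t => RelL I k t ∧ lStr I k t u) := hsub hu'
    simp only [Finset.mem_filter, lStr] at this
    exact (Finset.mem_filter.1 (hsub hu')).2.2.2 (I.lRefl k u hu)

lemma skey_lt_of_sStr {s : S} {p q : P} (hp : p ∈ I.acc s) (hq : q ∈ I.acc s)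
    (h : sStr I s p q) : skey I (s, p) < skey I (s, q) :=
  digit_lt idxP_lt (scnt_lt_of_sStr hp hq h)

lemma skey_inj_same {s : S} {p q : P} (h : skey I (s, p) = skey I (s, q)) : p = q :=
  idxP_inj (digit_eq idxP_lt idxP_lt h).2

lemma pkey_lt_of_lStr {e f : S × P} (hk : I.lec e.2 = I.lec f.2)
    (hu : RelL I (I.lec e.2) e.1) (hv : RelL I (I.lec e.2) f.1)
    (h : lStr I (I.lec e.2) e.1 f.1) : pkey I e < pkey I f := by
  unfold pkey
  rw [← hk]
  apply digit_lt idxP_lt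
  apply digit_lt (scnt_lt_B _ _)
  apply digit_lt idxS_lt
  exact Nat.add_lt_add_left (lcnt_lt_of_lStr hu hv h) _

lemma pkey_inj {e f : S × P} (h : pkey I e = pkey I f) : e = f := by
  unfold pkey at h
  obtain ⟨h1, h2⟩ := digit_eq idxP_lt idxP_lt h
  obtain ⟨h3, _⟩ := digit_eq (scnt_lt_B _ _) (scnt_lt_B _ _) h1
  obtain ⟨_, h5⟩ := digit_eq idxS_lt idxS_lt h3
  have hs : e.1 = f.1 := idxS_inj h5
  have hp : e.2 = f.2 := idxP_inj h2
  exact Prod.ext hs hp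

end Keys
end SPARH
namespace SPARH
open SPAST Finset
set_option linter.unusedSectionVars false

variable {S P L : Type} [Fintype S] [Fintype P] [Fintype L]
  [DecidableEq S] [DecidableEq P] [DecidableEq L]

section Matching

variable {I : SPAST S P L} {M : Finset (S × P)}

noncomputable def EE (I : SPAST S P L) : Finset (S × P) :=
  Finset.univ.filter (fun e => e.2 ∈ I.acc e.1)

lemma mem_EE {e : S × P} : e ∈ EE I ↔ e.2 ∈ I.acc e.1 := by
  simp [EE]

lemma mem_projAsg {u : S} {p : P} (hM : I.IsMatching M) :
    u ∈ projAsg M p ↔ (u, p) ∈ M := by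
  unfold projAsg
  simp only [Finset.mem_image, Finset.mem_filter]
  constructor
  · rintro ⟨f, ⟨hfM, hf2⟩, hf1⟩
    have : f = (u, p) := by
      cases f; simp_all
    rwa [this] at hfM
  · intro h
    exact ⟨(u, p), ⟨h, rfl⟩, rfl⟩

lemma mem_lecAsg {u : S} {k : L} :
    u ∈ lecAsg I M k ↔ ∃ q, I.lec q = k ∧ (u, q) ∈ M := by
  unfold lecAsg
  simp only [Finset.mem_image, Finset.mem_filter]
  constructor
  · rintro ⟨f, ⟨hfM, hf2⟩, hf1⟩
    refine ⟨f.2, hf2, ?_⟩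
    have : (u, f.2) = f := by cases f; simp_all
    rwa [this]
  · rintro ⟨q, hq, hM'⟩
    exact ⟨(u, q), ⟨hM', hq⟩, rfl⟩

lemma projAsg_card (hM : I.IsMatching M) (p : P) :
    (projAsg M p).card = (M.filter (fun f => f.2 = p)).card := by
  unfold projAsg
  apply Finset.card_image_of_injOn
  intro f hf g hg h
  simp only [Finset.mem_coe, Finset.mem_filter] at hf hg
  exact Prod.ext h (hf.2.trans hg.2.symm)

lemma lecAsg_card (hM : I.IsMatching M) (k : L) :
    (lecAsg I M k).card = (M.filter (fun f => I.lec f.2 = k)).card := by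
  unfold lecAsg
  apply Finset.card_image_of_injOn
  intro f hf g hg h
  simp only [Finset.mem_coe, Finset.mem_filter] at hf hg
  refine Prod.ext h (hM.2.1 f.1 f.2 g.2 ?_ ?_)
  · have : (f.1, f.2) = f := rfl
    rw [this]; exact hf.1
  · have : (f.1, g.2) = g := by rw [h]
    rw [this]; exact hg.1

lemma exists_worst (k : L) (T : Finset S) (hne : T.Nonempty)
    (hrel : ∀ t ∈ T, RelL I k t) : ∃ t, WorstIn I k T t := by
  obtain ⟨t, htT, hmax⟩ := Finset.exists_max_image T (lcnt I k) hne
  refine ⟨t, htT, ?_⟩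
  intro t' ht'
  by_contra hnp
  rcases I.lTotal k t' t (hrel t' ht') (hrel t htT) with h | h
  · exact hnp h
  · have : lStr I k t t' := ⟨h, hnp⟩
    have := lcnt_lt_of_lStr (hrel t htT) (hrel t' ht') this
    have := hmax t' ht'
    omega

lemma rel_of_mem (hM : I.IsMatching M) {f : S × P} (hf : f ∈ M) :
    RelL I (I.lec f.2) f.1 :=
  ⟨f.2, hM.1 f hf, rfl⟩

/-- The key consequence of super-stability: every acceptable pair not in `M`
whose student-side condition holds is blocked on the lecturer side. -/
lemma excuse (hM : SuperStable I M) {s : S} {p : P}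
    (hacc : p ∈ I.acc s) (hnm : (s, p) ∉ M)
    (ha : ∀ q, (s, q) ∈ M → ¬ sStr I s q p) :
    ((M.filter (fun f => f.2 = p)).card = I.c p ∧
      ∀ f ∈ M, f.2 = p → lStr I (I.lec p) f.1 s) ∨
    ((M.filter (fun f => I.lec f.2 = I.lec p)).card = I.d (I.lec p) ∧
      ∀ f ∈ M, I.lec f.2 = I.lec p → lStr I (I.lec p) f.1 s) := by
  obtain ⟨hmatch, hstab⟩ := hM
  have hnb := hstab s p
  unfold SuperBlocking at hnb
  push_neg at hnb
  have hb := hnb hacc hnm (by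
    intro q hq hqp
    by_contra h'
    exact ha q hq ⟨hqp, h'⟩)
  obtain ⟨hb1, hb2, hb3⟩ := hb
  have hsrel : RelL I (I.lec p) s := ⟨p, hacc, rfl⟩
  have hple : (M.filter (fun f => f.2 = p)).card ≤ I.c p := hmatch.2.2.1 p
  have hkle : (M.filter (fun f => I.lec f.2 = I.lec p)).card ≤ I.d (I.lec p) :=
    hmatch.2.2.2 (I.lec p)
  by_cases hfull : (projAsg M p).card < I.c p
  · -- project undersubscribed; lecturer full
    right
    have hkfull : (lecAsg I M (I.lec p)).card = I.d (I.lec p) := by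
      have h1 := hb1 hfull
      have h2 := lecAsg_card hmatch (I.lec p)
      omega
    obtain ⟨hs_not, hworst⟩ := hb2 hfull hkfull
    have hne : (lecAsg I M (I.lec p)).Nonempty := by
      rw [← Finset.card_pos, hkfull]; exact I.dpos _
    have hrel : ∀ t ∈ lecAsg I M (I.lec p), RelL I (I.lec p) t := by
      intro t ht
      rw [mem_lecAsg] at ht
      obtain ⟨q, hq, hMq⟩ := ht
      exact ⟨q, hmatch.1 _ hMq, hq⟩
    obtain ⟨t, hworst_t⟩ := exists_worst (I.lec p) _ hne hrel
    have hts : lStr I (I.lec p) t s := by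
      have hnlp := hworst t hworst_t
      rcases I.lTotal (I.lec p) t s (hrel t hworst_t.1) hsrel with h | h
      · exact ⟨h, hnlp⟩
      · exact absurd h hnlp
    constructor
    · rw [← lecAsg_card hmatch]; exact hkfull
    · intro f hf hfk
      have hmem : f.1 ∈ lecAsg I M (I.lec p) := by
        rw [mem_lecAsg]
        refine ⟨f.2, hfk, ?_⟩
        have : (f.1, f.2) = f := rfl
        rw [this]; exact hf
      have hft : I.lPref (I.lec p) f.1 t := hworst_t.2 f.1 hmem
      have hfrel := hrel f.1 hmem
      have htrel := hrel t hworst_t.1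
      refine ⟨I.lTrans _ _ _ _ hfrel htrel hsrel hft hts.1, ?_⟩
      intro hsf
      exact hts.2 (I.lTrans _ _ _ _ hsrel hfrel htrel hsf hft)
  · -- project full
    left
    have hpfull : (projAsg M p).card = I.c p := by
      have := projAsg_card hmatch p
      omega
    have hworst := hb3 hpfull
    have hne : (projAsg M p).Nonempty := by
      rw [← Finset.card_pos, hpfull]; exact I.cpos _
    have hrel : ∀ t ∈ projAsg M p, RelL I (I.lec p) t := by
      intro t ht
      rw [mem_projAsg hmatch] at ht
      exact ⟨p, hmatch.1 _ ht, rfl⟩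
    obtain ⟨t, hworst_t⟩ := exists_worst (I.lec p) _ hne hrel
    have hts : lStr I (I.lec p) t s := by
      have hnlp := hworst t hworst_t
      rcases I.lTotal (I.lec p) t s (hrel t hworst_t.1) hsrel with h | h
      · exact ⟨h, hnlp⟩
      · exact absurd h hnlp
    constructor
    · rw [← projAsg_card hmatch]; exact hpfull
    · intro f hf hf2
      have hmem : f.1 ∈ projAsg M p := by
        rw [mem_projAsg hmatch]
        have : f = (f.1, p) := Prod.ext rfl hf2
        rwa [← this]
      have hft : I.lPref (I.lec p) f.1 t := hworst_t.2 f.1 hmem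
      have hfrel := hrel f.1 hmem
      have htrel := hrel t hworst_t.1
      refine ⟨I.lTrans _ _ _ _ hfrel htrel hsrel hft hts.1, ?_⟩
      intro hsf
      exact hts.2 (I.lTrans _ _ _ _ hsrel hfrel htrel hsf hft)

end Matching
end SPARH
namespace SPARH
open SPAST Finset
set_option linter.unusedSectionVars false

variable {S P L : Type} [Fintype S] [Fintype P] [Fintype L]
  [DecidableEq S] [DecidableEq P] [DecidableEq L]

section Greedy

variable (I : SPAST S P L)

def okIns (A : Finset (S × P)) (e : S × P) : Prop :=
  e.2 ∈ I.acc e.1 ∧ (A.filter (fun f => f.2 = e.2)).card < I.c e.2 ∧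
    (A.filter (fun f => I.lec f.2 = I.lec e.2)).card < I.d (I.lec e.2)

noncomputable def go : List (S × P) → Finset (S × P) → Finset (S × P)
  | [], A => A
  | e :: l, A => go l (if okIns I A e then insert e A else A)

local instance pkeyTrans : IsTrans (S × P) (fun e f => pkey I e ≤ pkey I f) :=
  ⟨fun _ _ _ hab hbc => le_trans hab hbc⟩
local instance pkeyAntisymm : Std.Antisymm (fun e f => pkey I e ≤ pkey I f) :=
  ⟨fun _ _ hab hba => pkey_inj (le_antisymm hab hba)⟩
local instance pkeyTotal : Std.Total (fun e f => pkey I e ≤ pkey I f) :=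
  ⟨fun _ _ => le_total _ _⟩

noncomputable def sortE (Y : Finset (S × P)) : List (S × P) :=
  Finset.sort Y (fun e f => pkey I e ≤ pkey I f)

noncomputable def CL (Y : Finset (S × P)) : Finset (S × P) := go I (sortE I Y) ∅

variable {I}

lemma mem_sortE {Y : Finset (S × P)} {e : S × P} : e ∈ sortE I Y ↔ e ∈ Y :=
  Finset.mem_sort _

lemma sortE_toFinset {Y : Finset (S × P)} : (sortE I Y).toFinset = Y :=
  Finset.sort_toFinset _ _

lemma sortE_pairwise {Y : Finset (S × P)} :
    (sortE I Y).Pairwise (fun e f => pkey I e < pkey I f) := by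
  have h1 : (sortE I Y).Pairwise (fun e f => pkey I e ≤ pkey I f) :=
    Finset.pairwise_sort _ _
  have h2 : (sortE I Y).Nodup := Finset.sort_nodup _ _
  have := List.Pairwise.and h1 h2
  apply this.imp
  rintro a b ⟨hle, hne⟩
  rcases lt_or_eq_of_le hle with h | h
  · exact h
  · exact absurd (pkey_inj h) hne

lemma subset_go : ∀ (l : List (S × P)) (A : Finset (S × P)), A ⊆ go I l A := by
  intro l
  induction l with
  | nil => intro A; exact subset_rfl
  | cons e t ih =>
    intro A
    refine subset_trans ?_ (ih _)
    split
    · exact subset_insert _ _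
    · exact subset_rfl

lemma go_subset : ∀ (l : List (S × P)) (A : Finset (S × P)),
    go I l A ⊆ A ∪ l.toFinset := by
  intro l
  induction l with
  | nil => intro A; simp [go]
  | cons e t ih =>
    intro A
    show go I t _ ⊆ _
    refine subset_trans (ih _) ?_
    intro x hx
    simp only [Finset.mem_union, List.toFinset_cons, Finset.mem_insert] at hx ⊢
    split at hx
    · rcases hx with hx | hx
      · rcases Finset.mem_insert.1 hx with hx | hx
        · right; left; exact hx
        · left; exact hx
      · right; right; exact hx
    · tauto

def indepC (I : SPAST S P L) (A : Finset (S × P)) : Prop :=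
  (∀ p, (A.filter (fun f => f.2 = p)).card ≤ I.c p) ∧
  (∀ k, (A.filter (fun f => I.lec f.2 = k)).card ≤ I.d k)

lemma indep_insert {A : Finset (S × P)} {e : S × P} (hA : indepC I A)
    (hok : okIns I A e) : indepC I (insert e A) := by
  constructor
  · intro p
    rw [Finset.filter_insert]
    split
    · next h =>
      subst h
      exact le_trans (Finset.card_insert_le _ _) hok.2.1
    · exact hA.1 p
  · intro k
    rw [Finset.filter_insert]
    split
    · next h =>
      subst h
      exact le_trans (Finset.card_insert_le _ _) hok.2.2
    · exact hA.2 k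

lemma go_indep : ∀ (l : List (S × P)) (A : Finset (S × P)),
    indepC I A → indepC I (go I l A) := by
  intro l
  induction l with
  | nil => intro A hA; exact hA
  | cons e t ih =>
    intro A hA
    apply ih
    split
    · next hok => exact indep_insert hA hok
    · exact hA

lemma go_reject : ∀ (l : List (S × P)) (A : Finset (S × P)) {e : S × P},
    e ∈ l → e.2 ∈ I.acc e.1 → e ∉ go I l A →
    I.c e.2 ≤ ((go I l A).filter (fun f => f.2 = e.2)).card ∨
    I.d (I.lec e.2) ≤ ((go I l A).filter (fun f => I.lec f.2 = I.lec e.2)).card := by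
  intro l
  induction l with
  | nil => intro A e he _ _; simp at he
  | cons a t ih =>
    intro A e he hacc hne
    rcases List.mem_cons.1 he with rfl | he'
    · show _ ≤ ((go I t _).filter _).card ∨ _
      by_cases hok : okIns I A e
      · exfalso
        apply hne
        show e ∈ go I t _
        rw [if_pos hok]
        exact subset_go t _ (Finset.mem_insert_self _ _)
      · unfold okIns at hok
        push_neg at hok
        have h2 := hok hacc
        have hsub : A ⊆ go I t (if okIns I A e then insert e A else A) := by
          refine subset_trans ?_ (subset_go _ _)
          split
          · exact subset_insert _ _
          · exact subset_rfl
        rcases Nat.lt_or_ge ((A.filter (fun f => f.2 = e.2)).card) (I.c e.2) with hlt | hge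
        · right
          refine le_trans (h2 hlt) (Finset.card_le_card ?_)
          exact Finset.filter_subset_filter _ hsub
        · left
          refine le_trans hge (Finset.card_le_card ?_)
          exact Finset.filter_subset_filter _ hsub
    · exact ih _ he' hacc hne

/-- The computation lemma: if every element of the (sorted) list outside `M` is
blocked by earlier `M`-elements saturating its project or lecturer, greedy
returns exactly `M`. -/
lemma go_eq_M {M : Finset (S × P)}
    (hME : ∀ f ∈ M, f.2 ∈ I.acc f.1)
    (hMp : ∀ p, (M.filter (fun f => f.2 = p)).card ≤ I.c p)
    (hMk : ∀ k, (M.filter (fun f => I.lec f.2 = k)).card ≤ I.d k) :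
    ∀ (l : List (S × P)) (A : Finset (S × P)),
    l.Pairwise (fun e f => pkey I e < pkey I f) →
    (∀ e ∈ l, e ∉ M →
      ((M.filter (fun f => f.2 = e.2)).card = I.c e.2 ∧
        ∀ f ∈ M, f.2 = e.2 → pkey I f < pkey I e) ∨
      ((M.filter (fun f => I.lec f.2 = I.lec e.2)).card = I.d (I.lec e.2) ∧
        ∀ f ∈ M, I.lec f.2 = I.lec e.2 → pkey I f < pkey I e)) →
    A ⊆ M →
    (∀ f ∈ M, f ∉ A → f ∈ l) →
    (∀ f ∈ A, ∀ e ∈ l, pkey I f < pkey I e) →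
    go I l A = M := by
  intro l
  induction l with
  | nil =>
    intro A _ _ hAM hMA _
    apply Finset.Subset.antisymm hAM
    intro f hf
    by_contra hfA
    exact List.not_mem_nil (hMA f hf hfA)
  | cons e t ih =>
    intro A hpw hrej hAM hMA hord
    have hpw_head : ∀ f ∈ t, pkey I e < pkey I f := fun f hf => (List.pairwise_cons.1 hpw).1 f hf
    have hpw_tail := (List.pairwise_cons.1 hpw).2
    have heA : e ∉ A := by
      intro h
      exact lt_irrefl _ (hord e h e (List.mem_cons_self))
    by_cases heM : e ∈ M
    · -- e must be accepted
      have hok : okIns I A e := by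
        refine ⟨hME e heM, ?_, ?_⟩
        · have hss : A.filter (fun f => f.2 = e.2) ⊂ M.filter (fun f => f.2 = e.2) := by
            refine ⟨Finset.filter_subset_filter _ hAM, ?_⟩
            intro hcon
            have : e ∈ A.filter (fun f => f.2 = e.2) := hcon (Finset.mem_filter.2 ⟨heM, rfl⟩)
            exact heA (Finset.mem_filter.1 this).1
          exact lt_of_lt_of_le (Finset.card_lt_card hss) (hMp e.2)
        · have hss : A.filter (fun f => I.lec f.2 = I.lec e.2) ⊂
              M.filter (fun f => I.lec f.2 = I.lec e.2) := by
            refine ⟨Finset.filter_subset_filter _ hAM, ?_⟩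
            intro hcon
            have : e ∈ A.filter (fun f => I.lec f.2 = I.lec e.2) :=
              hcon (Finset.mem_filter.2 ⟨heM, rfl⟩)
            exact heA (Finset.mem_filter.1 this).1
          exact lt_of_lt_of_le (Finset.card_lt_card hss) (hMk (I.lec e.2))
      show go I t _ = M
      rw [if_pos hok]
      apply ih _ hpw_tail (fun x hx => hrej x (List.mem_cons_of_mem _ hx))
      · intro f hf
        rcases Finset.mem_insert.1 hf with rfl | hf
        · exact heM
        · exact hAM hf
      · intro f hf hfA
        have : f ∈ e :: t := hMA f hf (fun h => hfA (Finset.mem_insert_of_mem h))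
        rcases List.mem_cons.1 this with rfl | h
        · exact absurd (Finset.mem_insert_self _ _) hfA
        · exact h
      · intro f hf x hx
        rcases Finset.mem_insert.1 hf with rfl | hf
        · exact hpw_head x hx
        · exact hord f hf x (List.mem_cons_of_mem _ hx)
    · -- e must be rejected
      have hMsub : ∀ f ∈ M, pkey I f < pkey I e → f ∈ A := by
        intro f hf hlt
        by_contra hfA
        rcases List.mem_cons.1 (hMA f hf hfA) with rfl | h
        · exact lt_irrefl _ hlt
        · exact lt_asymm hlt (hpw_head f h)
      have hnok : ¬ okIns I A e := by
        rcases hrej e (List.mem_cons_self) heM with ⟨hcard, hall⟩ | ⟨hcard, hall⟩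
        · intro hok
          have hsub : M.filter (fun f => f.2 = e.2) ⊆ A.filter (fun f => f.2 = e.2) := by
            intro f hf
            obtain ⟨hfM, hf2⟩ := Finset.mem_filter.1 hf
            exact Finset.mem_filter.2 ⟨hMsub f hfM (hall f hfM hf2), hf2⟩
          have := Finset.card_le_card hsub
          have h21 := hok.2.1
          omega
        · intro hok
          have hsub : M.filter (fun f => I.lec f.2 = I.lec e.2) ⊆
              A.filter (fun f => I.lec f.2 = I.lec e.2) := by
            intro f hf
            obtain ⟨hfM, hf2⟩ := Finset.mem_filter.1 hf
            exact Finset.mem_filter.2 ⟨hMsub f hfM (hall f hfM hf2), hf2⟩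
          have := Finset.card_le_card hsub
          have := hok.2.2
          omega
      show go I t _ = M
      rw [if_neg hnok]
      apply ih _ hpw_tail (fun x hx => hrej x (List.mem_cons_of_mem _ hx)) hAM
      · intro f hf hfA
        rcases List.mem_cons.1 (hMA f hf hfA) with rfl | h
        · exact absurd hf heM
        · exact h
      · intro f hf x hx
        exact hord f hf x (List.mem_cons_of_mem _ hx)

end Greedy
end SPARH
namespace SPARH
open SPAST Finset
set_option linter.unusedSectionVars false

variable {S P L : Type} [Fintype S] [Fintype P] [Fintype L]
  [DecidableEq S] [DecidableEq P] [DecidableEq L]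

section Subst

variable {I : SPAST S P L}

lemma card_lec_eq_sum (X : Finset (S × P)) (k : L) :
    (X.filter (fun f => I.lec f.2 = k)).card =
    ∑ p ∈ Finset.univ.filter (fun p => I.lec p = k), (X.filter (fun f => f.2 = p)).card := by
  rw [Finset.card_eq_sum_card_fiberwise
    (f := fun f : S × P => f.2) (t := Finset.univ.filter (fun p => I.lec p = k))
    (by intro x hx; simp only [Finset.mem_filter] at hx ⊢
        exact Finset.mem_filter.2 ⟨Finset.mem_univ _, (Finset.mem_filter.1 hx).2⟩)]
  apply Finset.sum_congr rfl
  intro p hp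
  simp only [Finset.mem_filter] at hp
  congr 1
  ext f
  simp only [Finset.mem_filter]
  constructor
  · rintro ⟨⟨h1, _⟩, h3⟩; exact ⟨h1, h3⟩
  · rintro ⟨h1, h2⟩; exact ⟨⟨h1, by rw [h2, hp.2]⟩, h2⟩

def INVC (I : SPAST S P L) (A A' : Finset (S × P)) : Prop :=
  ∀ k, (A.filter (fun f => I.lec f.2 = k)).card = I.d k ∨
    ∀ p, I.lec p = k → (A'.filter (fun f => f.2 = p)).card ≤ (A.filter (fun f => f.2 = p)).card

lemma INVC_lec_le {A A' : Finset (S × P)} {k : L}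
    (h : ∀ p, I.lec p = k → (A'.filter (fun f => f.2 = p)).card ≤ (A.filter (fun f => f.2 = p)).card) :
    (A'.filter (fun f => I.lec f.2 = k)).card ≤ (A.filter (fun f => I.lec f.2 = k)).card := by
  rw [card_lec_eq_sum A k, card_lec_eq_sum A' k]
  apply Finset.sum_le_sum
  intro p hp
  simp only [Finset.mem_filter] at hp
  exact h p hp.2

lemma go_subst : ∀ (l l' : List (S × P)) (A A' : Finset (S × P)),
    l'.Sublist l →
    l.Pairwise (fun e f => pkey I e < pkey I f) →
    (∀ e ∈ l, e.2 ∈ I.acc e.1) →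
    indepC I A →
    (∀ f ∈ A, ∀ e ∈ l, pkey I f < pkey I e) →
    (∀ f ∈ A', ∀ e ∈ l', pkey I f < pkey I e) →
    INVC I A A' →
    (go I l A) ∩ l'.toFinset ⊆ go I l' A' := by
  intro l
  induction l with
  | nil =>
    intro l' A A' hsub _ _ _ _ _ _
    have : l' = [] := List.eq_nil_of_sublist_nil hsub
    subst this
    intro x hx
    simp at hx
  | cons e t ih =>
    intro l' A A' hsub hpw hacc hA hordA hordA' hinv
    have hpw_head : ∀ f ∈ t, pkey I e < pkey I f :=
      fun f hf => (List.pairwise_cons.1 hpw).1 f hf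
    have hpw_tail := (List.pairwise_cons.1 hpw).2
    have hacc_tail : ∀ x ∈ t, x.2 ∈ I.acc x.1 := fun x hx => hacc x (List.mem_cons_of_mem _ hx)
    have hacce : e.2 ∈ I.acc e.1 := hacc e (List.mem_cons_self)
    have heA : e ∉ A := fun h => lt_irrefl _ (hordA e h e (List.mem_cons_self))
    rcases List.sublist_cons_iff.1 hsub with hsub' | ⟨r, rfl, hr⟩
    · -- e is not processed by the primed run
      show (go I t (if okIns I A e then insert e A else A)) ∩ l'.toFinset ⊆ go I l' A'
      by_cases hok : okIns I A e
      · rw [if_pos hok]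
        apply ih l' (insert e A) A' hsub' hpw_tail hacc_tail (indep_insert hA hok)
        · intro f hf x hx
          rcases Finset.mem_insert.1 hf with rfl | hf
          · exact hpw_head x hx
          · exact hordA f hf x (List.mem_cons_of_mem _ hx)
        · exact hordA'
        · intro k
          rcases hinv k with h | h
          · left
            apply le_antisymm ((indep_insert hA hok).2 k)
            rw [← h]
            exact Finset.card_le_card (Finset.filter_subset_filter _ (Finset.subset_insert _ _))
          · right
            intro p hp
            exact le_trans (h p hp) (Finset.card_le_card (Finset.filter_subset_filter _ (Finset.subset_insert _ _)))
      · rw [if_neg hok]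
        exact ih l' A A' hsub' hpw_tail hacc_tail hA
          (fun f hf x hx => hordA f hf x (List.mem_cons_of_mem _ hx)) hordA' hinv
    · -- both runs process e
      have hpw' : (e :: r).Pairwise (fun a b => pkey I a < pkey I b) :=
        hpw.sublist (List.cons_sublist_cons.2 hr)
      have hpw'_head : ∀ f ∈ r, pkey I e < pkey I f :=
        fun f hf => (List.pairwise_cons.1 hpw').1 f hf
      have heA' : e ∉ A' := fun h => lt_irrefl _ (hordA' e h e (List.mem_cons_self))
      have hordA'_tail : ∀ f ∈ A', ∀ x ∈ r, pkey I f < pkey I x :=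
        fun f hf x hx => hordA' f hf x (List.mem_cons_of_mem _ hx)
      show (go I t (if okIns I A e then insert e A else A)) ∩ (e :: r).toFinset ⊆
        go I (e :: r) A'
      by_cases hok : okIns I A e
      · -- unprimed run accepts e, so primed does too
        have hproj : ∀ p, I.lec p = I.lec e.2 →
            (A'.filter (fun f => f.2 = p)).card ≤ (A.filter (fun f => f.2 = p)).card := by
          rcases hinv (I.lec e.2) with h | h
          · exact absurd h (by have := hok.2.2; omega)
          · exact h
        have hok' : okIns I A' e := by
          refine ⟨hacce, ?_, ?_⟩
          · exact lt_of_le_of_lt (hproj e.2 rfl) hok.2.1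
          · exact lt_of_le_of_lt (INVC_lec_le hproj) hok.2.2
        rw [if_pos hok]
        show _ ⊆ go I r (if okIns I A' e then insert e A' else A')
        rw [if_pos hok']
        intro x hx
        obtain ⟨hx1, hx2⟩ := Finset.mem_inter.1 hx
        rw [List.toFinset_cons, Finset.mem_insert] at hx2
        rcases hx2 with rfl | hx2
        · exact subset_go _ _ (Finset.mem_insert_self _ _)
        · refine ih r (insert e A) (insert e A') hr hpw_tail hacc_tail
            (indep_insert hA hok) ?_ ?_ ?_ (Finset.mem_inter.2 ⟨hx1, hx2⟩)
          · intro f hf y hy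
            rcases Finset.mem_insert.1 hf with rfl | hf
            · exact hpw_head y hy
            · exact hordA f hf y (List.mem_cons_of_mem _ hy)
          · intro f hf y hy
            rcases Finset.mem_insert.1 hf with rfl | hf
            · exact hpw'_head y hy
            · exact hordA'_tail f hf y hy
          · intro k
            rcases hinv k with h | h
            · left
              apply le_antisymm ((indep_insert hA hok).2 k)
              rw [← h]
              exact Finset.card_le_card (Finset.filter_subset_filter _ (Finset.subset_insert _ _))
            · right
              intro p hp
              rw [Finset.filter_insert, Finset.filter_insert]
              split
              · next hpe =>
                rw [Finset.card_insert_of_notMem (fun hc => heA' (Finset.mem_filter.1 hc).1),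
                  Finset.card_insert_of_notMem (fun hc => heA (Finset.mem_filter.1 hc).1)]
                exact Nat.succ_le_succ (h p hp)
              · exact h p hp
      · -- unprimed run rejects e
        rw [if_neg hok]
        have hreason : I.c e.2 ≤ (A.filter (fun f => f.2 = e.2)).card ∨
            I.d (I.lec e.2) ≤ (A.filter (fun f => I.lec f.2 = I.lec e.2)).card := by
          unfold okIns at hok
          push_neg at hok
          have := hok hacce
          omega
        have heGo : e ∉ go I t A := by
          intro hc
          have := go_subset t A hc
          rw [Finset.mem_union, List.mem_toFinset] at this
          rcases this with h | h
          · exact heA h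
          · exact lt_irrefl _ (hpw_head e h)
        by_cases hok' : okIns I A' e
        · show _ ⊆ go I r (if okIns I A' e then insert e A' else A')
          rw [if_pos hok']
          intro x hx
          obtain ⟨hx1, hx2⟩ := Finset.mem_inter.1 hx
          rw [List.toFinset_cons, Finset.mem_insert] at hx2
          rcases hx2 with rfl | hx2
          · exact absurd hx1 heGo
          · refine ih r A (insert e A') hr hpw_tail hacc_tail hA
              (fun f hf y hy => hordA f hf y (List.mem_cons_of_mem _ hy)) ?_ ?_
              (Finset.mem_inter.2 ⟨hx1, hx2⟩)
            · intro f hf y hy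
              rcases Finset.mem_insert.1 hf with rfl | hf
              · exact hpw'_head y hy
              · exact hordA'_tail f hf y hy
            · intro k
              by_cases hk : I.lec e.2 = k
              · subst hk
                by_cases hsat : (A.filter (fun f => I.lec f.2 = I.lec e.2)).card = I.d (I.lec e.2)
                · left; exact hsat
                · have hlt : (A.filter (fun f => I.lec f.2 = I.lec e.2)).card < I.d (I.lec e.2) :=
                    lt_of_le_of_ne (hA.2 _) hsat
                  have hcfull : I.c e.2 ≤ (A.filter (fun f => f.2 = e.2)).card := by
                    rcases hreason with h | h
                    · exact h
                    · omega
                  rcases hinv (I.lec e.2) with h | h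
                  · exact absurd h hsat
                  · right
                    intro p hp
                    rw [Finset.filter_insert]
                    split
                    · next hpe =>
                      subst hpe
                      rw [Finset.card_insert_of_notMem
                        (fun hc => heA' (Finset.mem_filter.1 hc).1)]
                      have := hok'.2.1
                      omega
                    · exact h p hp
              · rcases hinv k with h | h
                · left; exact h
                · right
                  intro p hp
                  rw [Finset.filter_insert]
                  split
                  · next hpe =>
                    exact absurd (hpe ▸ hp) hk
                  · exact h p hp
        · show _ ⊆ go I r (if okIns I A' e then insert e A' else A')
          rw [if_neg hok']
          intro x hx
          obtain ⟨hx1, hx2⟩ := Finset.mem_inter.1 hx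
          rw [List.toFinset_cons, Finset.mem_insert] at hx2
          rcases hx2 with rfl | hx2
          · exact absurd hx1 heGo
          · exact ih r A A' hr hpw_tail hacc_tail hA
              (fun f hf y hy => hordA f hf y (List.mem_cons_of_mem _ hy)) hordA'_tail hinv
              (Finset.mem_inter.2 ⟨hx1, hx2⟩)

lemma sublist_of_subset_sorted :
    ∀ (l l' : List (S × P)),
    l.Pairwise (fun a b => pkey I a < pkey I b) →
    l'.Pairwise (fun a b => pkey I a < pkey I b) →
    (∀ x ∈ l', x ∈ l) → l'.Sublist l := by
  intro l
  induction l with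
  | nil =>
    intro l' _ _ hmem
    cases l' with
    | nil => exact List.Sublist.refl _
    | cons b t' => exact absurd (hmem b (List.mem_cons_self)) List.not_mem_nil
  | cons a t ih =>
    intro l' hpw hpw' hmem
    cases l' with
    | nil => exact List.nil_sublist _
    | cons b t' =>
      have hpw_head : ∀ f ∈ t, pkey I a < pkey I f :=
        fun f hf => (List.pairwise_cons.1 hpw).1 f hf
      have hpw'_head : ∀ f ∈ t', pkey I b < pkey I f :=
        fun f hf => (List.pairwise_cons.1 hpw').1 f hf
      by_cases hab : b = a
      · subst hab
        apply List.cons_sublist_cons.2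
        apply ih t' (List.pairwise_cons.1 hpw).2 (List.pairwise_cons.1 hpw').2
        intro x hx
        rcases List.mem_cons.1 (hmem x (List.mem_cons_of_mem _ hx)) with rfl | h
        · exact absurd (hpw'_head x hx) (lt_irrefl _)
        · exact h
      · have hbt : b ∈ t := by
          rcases List.mem_cons.1 (hmem b (List.mem_cons_self)) with h | h
          · exact absurd h hab
          · exact h
        have : ∀ x ∈ b :: t', x ∈ t := by
          intro x hx
          rcases List.mem_cons.1 (hmem x hx) with rfl | h
          · -- x = a; derive contradiction
            exfalso
            rcases List.mem_cons.1 hx with rfl | hxt'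
            · exact hab rfl
            · exact lt_asymm (hpw_head b hbt) (hpw'_head _ hxt')
          · exact h
        exact (ih (b :: t') (List.pairwise_cons.1 hpw).2 hpw' this).cons _

lemma CL_subset {Y : Finset (S × P)} : CL I Y ⊆ Y := by
  unfold CL
  refine subset_trans (go_subset _ _) ?_
  rw [sortE_toFinset]
  simp

lemma CL_indep {Y : Finset (S × P)} : indepC I (CL I Y) := by
  apply go_indep
  constructor <;> intro _ <;> simp

lemma CL_subst {Y' Y : Finset (S × P)} (h : Y' ⊆ Y) (hY : Y ⊆ EE I) :
    CL I Y ∩ Y' ⊆ CL I Y' := by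
  have := go_subst (I := I) (sortE I Y) (sortE I Y') ∅ ∅
    (sublist_of_subset_sorted _ _ sortE_pairwise sortE_pairwise
      (fun x hx => mem_sortE.2 (h (mem_sortE.1 hx))))
    sortE_pairwise
    (fun e he => mem_EE.1 (hY (mem_sortE.1 he)))
    (by constructor <;> intro _ <;> simp)
    (by intro f hf; simp at hf)
    (by intro f hf; simp at hf)
    (by intro k; right; intro p _; exact le_rfl)
  intro x hx
  obtain ⟨hx1, hx2⟩ := Finset.mem_inter.1 hx
  exact this (Finset.mem_inter.2 ⟨hx1, by rw [sortE_toFinset]; exact hx2⟩)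

lemma CL_reject {Y : Finset (S × P)} {e : S × P} (he : e ∈ Y) (hacc : e.2 ∈ I.acc e.1)
    (hne : e ∉ CL I Y) :
    I.c e.2 ≤ ((CL I Y).filter (fun f => f.2 = e.2)).card ∨
    I.d (I.lec e.2) ≤ ((CL I Y).filter (fun f => I.lec f.2 = I.lec e.2)).card :=
  go_reject _ _ (mem_sortE.2 he) hacc hne

lemma CL_LAD {Y' Y : Finset (S × P)} (h : Y' ⊆ Y) (hY : Y ⊆ EE I) :
    (CL I Y').card ≤ (CL I Y).card := by
  by_contra hlt
  push_neg at hlt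
  -- find a lecturer where the count is bigger in CL Y'
  have hsumk : ∀ X : Finset (S × P), X.card = ∑ k ∈ Finset.univ, (X.filter (fun f => I.lec f.2 = k)).card := by
    intro X
    exact Finset.card_eq_sum_card_fiberwise (fun x _ => Finset.mem_univ _)
  have : ∃ k : L, ((CL I Y).filter (fun f => I.lec f.2 = k)).card <
      ((CL I Y').filter (fun f => I.lec f.2 = k)).card := by
    by_contra hc
    push_neg at hc
    have := Finset.sum_le_sum (fun k (_ : k ∈ Finset.univ) => hc k)
    rw [← hsumk, ← hsumk] at this
    omega
  obtain ⟨k, hk⟩ := this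
  have : ∃ p ∈ Finset.univ.filter (fun p => I.lec p = k),
      ((CL I Y).filter (fun f => f.2 = p)).card < ((CL I Y').filter (fun f => f.2 = p)).card := by
    apply Finset.exists_lt_of_sum_lt
    rw [← card_lec_eq_sum, ← card_lec_eq_sum]
    exact hk
  obtain ⟨p, hp, hplt⟩ := this
  simp only [Finset.mem_filter] at hp
  have : ∃ e ∈ (CL I Y').filter (fun f => f.2 = p), e ∉ (CL I Y).filter (fun f => f.2 = p) := by
    by_contra hc
    push_neg at hc
    exact absurd (Finset.card_le_card hc) (by omega)
  obtain ⟨e, he1, he2⟩ := this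
  obtain ⟨heCL', hep⟩ := Finset.mem_filter.1 he1
  have heY' : e ∈ Y' := CL_subset heCL'
  have heCL : e ∉ CL I Y := fun hc => he2 (Finset.mem_filter.2 ⟨hc, hep⟩)
  have hacc : e.2 ∈ I.acc e.1 := mem_EE.1 (hY (h heY'))
  rcases CL_reject (h heY') hacc heCL with hsat | hsat
  · have h1 : ((CL I Y').filter (fun f => f.2 = e.2)).card ≤ I.c e.2 := CL_indep.1 e.2
    rw [hep] at hsat h1
    omega
  · have h1 : ((CL I Y').filter (fun f => I.lec f.2 = I.lec e.2)).card ≤ I.d (I.lec e.2) :=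
      CL_indep.2 _
    have hek : I.lec e.2 = k := by rw [hep]; exact hp.2
    rw [hek] at hsat h1
    omega

end Subst
end SPARH
namespace SPARH
open SPAST Finset
set_option linter.unusedSectionVars false

variable {S P L : Type} [Fintype S] [Fintype P] [Fintype L]
  [DecidableEq S] [DecidableEq P] [DecidableEq L]

section Student

variable (I : SPAST S P L)

noncomputable def CS (X : Finset (S × P)) : Finset (S × P) :=
  X.filter (fun e => e.2 ∈ I.acc e.1 ∧
    ∀ f ∈ X, f.1 = e.1 → f.2 ∈ I.acc f.1 → skey I e ≤ skey I f)

variable {I}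

lemma CS_subset {X : Finset (S × P)} : CS I X ⊆ X := Finset.filter_subset _ _

lemma mem_CS {X : Finset (S × P)} {e : S × P} :
    e ∈ CS I X ↔ e ∈ X ∧ e.2 ∈ I.acc e.1 ∧
      ∀ f ∈ X, f.1 = e.1 → f.2 ∈ I.acc f.1 → skey I e ≤ skey I f := by
  unfold CS
  rw [Finset.mem_filter]

lemma skey_inj {e f : S × P} (h1 : e.1 = f.1) (h2 : skey I e = skey I f) : e = f := by
  unfold skey at h2
  obtain ⟨_, h⟩ := digit_eq idxP_lt idxP_lt h2
  exact Prod.ext h1 (idxP_inj h)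

lemma CS_unique {X : Finset (S × P)} {e f : S × P} (he : e ∈ CS I X) (hf : f ∈ CS I X)
    (h : e.1 = f.1) : e = f := by
  rw [mem_CS] at he hf
  have h1 := he.2.2 f hf.1 h.symm hf.2.1
  have h2 := hf.2.2 e he.1 h he.2.1
  exact skey_inj h (le_antisymm h1 h2)

lemma CS_exists {X : Finset (S × P)} {s : S}
    (h : ∃ f ∈ X, f.1 = s ∧ f.2 ∈ I.acc f.1) : ∃ e ∈ CS I X, e.1 = s := by
  obtain ⟨f0, hf0X, hf0s, hf0acc⟩ := h
  set T := X.filter (fun f => f.1 = s ∧ f.2 ∈ I.acc f.1) with hT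
  have hne : T.Nonempty := ⟨f0, Finset.mem_filter.2 ⟨hf0X, hf0s, hf0acc⟩⟩
  obtain ⟨b, hbT, hbmin⟩ := Finset.exists_min_image T (skey I) hne
  obtain ⟨hbX, hbs, hbacc⟩ := Finset.mem_filter.1 hbT
  refine ⟨b, ?_, hbs⟩
  rw [mem_CS]
  refine ⟨hbX, hbacc, ?_⟩
  intro f hfX hfb hfacc
  exact hbmin f (Finset.mem_filter.2 ⟨hfX, by rw [hfb, hbs], hfacc⟩)

lemma CS_rej_mono {X X' : Finset (S × P)} (h : X ⊆ X') {e : S × P}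
    (heX : e ∈ X) (hne : e ∉ CS I X) : e ∉ CS I X' := by
  rw [mem_CS] at hne ⊢
  push_neg at hne ⊢
  intro heX' hacc
  obtain ⟨f, hfX, hf1, hf2, hf3⟩ := hne heX hacc
  exact ⟨f, h hfX, hf1, hf2, hf3⟩

end Student

section FixedPoint

variable (I : SPAST S P L)

noncomputable def XM (M : Finset (S × P)) : Finset (S × P) :=
  (EE I).filter (fun e => ∃ f ∈ M, f.1 = e.1 ∧ skey I f ≤ skey I e)

noncomputable def Ymap (X : Finset (S × P)) : Finset (S × P) :=
  EE I \ (X \ CS I X)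

noncomputable def Fmap (X : Finset (S × P)) : Finset (S × P) :=
  EE I \ (Ymap I X \ CL I (Ymap I X))

variable {I}

lemma M_subset_EE {M : Finset (S × P)} (hM : I.IsMatching M) : M ⊆ EE I := by
  intro f hf
  rw [mem_EE]
  exact hM.1 f hf

lemma M_subset_XM {M : Finset (S × P)} (hM : I.IsMatching M) : M ⊆ XM I M := by
  intro f hf
  unfold XM
  rw [Finset.mem_filter]
  exact ⟨M_subset_EE hM hf, f, hf, rfl, le_rfl⟩

lemma XM_subset_EE {M : Finset (S × P)} : XM I M ⊆ EE I := Finset.filter_subset _ _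

lemma Ymap_subset_EE {X : Finset (S × P)} : Ymap I X ⊆ EE I := Finset.sdiff_subset

lemma Fmap_subset_EE {X : Finset (S × P)} : Fmap I X ⊆ EE I := Finset.sdiff_subset

lemma Ymap_anti {X X' : Finset (S × P)} (h : X ⊆ X') : Ymap I X' ⊆ Ymap I X := by
  intro e he
  rw [Ymap, Finset.mem_sdiff] at he ⊢
  refine ⟨he.1, ?_⟩
  intro hc
  rw [Finset.mem_sdiff] at hc
  exact he.2 (Finset.mem_sdiff.2 ⟨h hc.1, CS_rej_mono h hc.1 hc.2⟩)

lemma Fmap_mono {X X' : Finset (S × P)} (h : X ⊆ X') : Fmap I X ⊆ Fmap I X' := by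
  intro e he
  rw [Fmap, Finset.mem_sdiff] at he ⊢
  refine ⟨he.1, ?_⟩
  intro hc
  rw [Finset.mem_sdiff] at hc
  have hY : Ymap I X' ⊆ Ymap I X := Ymap_anti h
  apply he.2
  rw [Finset.mem_sdiff]
  refine ⟨hY hc.1, ?_⟩
  intro hcl
  exact hc.2 (CL_subst hY Ymap_subset_EE (Finset.mem_inter.2 ⟨hcl, hc.1⟩))

lemma CS_XM {M : Finset (S × P)} (hM : I.IsMatching M) : CS I (XM I M) = M := by
  apply Finset.Subset.antisymm
  · intro e he
    rw [mem_CS] at he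
    obtain ⟨heXM, heacc, hemin⟩ := he
    unfold XM at heXM
    rw [Finset.mem_filter] at heXM
    obtain ⟨heEE, f, hfM, hf1, hf2⟩ := heXM
    have hfXM : f ∈ XM I M := M_subset_XM hM hfM
    have hfacc : f.2 ∈ I.acc f.1 := hM.1 f hfM
    have := hemin f hfXM hf1 hfacc
    have heq : e = f := skey_inj hf1.symm (le_antisymm this hf2)
    rw [heq]; exact hfM
  · intro f hfM
    rw [mem_CS]
    refine ⟨M_subset_XM hM hfM, hM.1 f hfM, ?_⟩
    intro g hgXM hg1 hgacc
    unfold XM at hgXM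
    rw [Finset.mem_filter] at hgXM
    obtain ⟨hgEE, f', hf'M, hf'1, hf'2⟩ := hgXM
    have : f' = f := by
      have h1 : (f'.1, f'.2) ∈ M := by
        have : (f'.1, f'.2) = f' := rfl
        rw [this]; exact hf'M
      have h2 : (f'.1, f.2) ∈ M := by
        have hcast : (f'.1, f.2) = f := by
          apply Prod.ext
          · rw [hf'1, hg1]
          · rfl
        rw [hcast]; exact hfM
      have := hM.2.1 f'.1 f'.2 f.2 h1 h2
      apply Prod.ext
      · rw [hf'1, hg1]
      · exact this
    rw [← this]
    exact hf'2

/-- The matching `M` is exactly the lecturer-side choice from `Ymap (XM M)`. -/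
lemma CL_YM {M : Finset (S × P)} (hM : SuperStable I M) :
    CL I (Ymap I (XM I M)) = M := by
  have hmatch := hM.1
  unfold CL
  apply go_eq_M (fun f hf => hmatch.1 f hf) hmatch.2.2.1 hmatch.2.2.2 _ ∅ sortE_pairwise
  · -- rejection certificates
    intro e hel heM
    have heY : e ∈ Ymap I (XM I M) := mem_sortE.1 hel
    rw [Ymap, Finset.mem_sdiff] at heY
    obtain ⟨heEE, hnd⟩ := heY
    have heXM : e ∉ XM I M := by
      intro hc
      exact hnd (Finset.mem_sdiff.2 ⟨hc, by rw [CS_XM hmatch]; exact heM⟩)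
    unfold XM at heXM
    rw [Finset.mem_filter] at heXM
    push_neg at heXM
    have hkey := heXM heEE
    have heacc : e.2 ∈ I.acc e.1 := mem_EE.1 heEE
    have henm : (e.1, e.2) ∉ M := by
      have : (e.1, e.2) = e := rfl
      rw [this]; exact heM
    have ha : ∀ q, (e.1, q) ∈ M → ¬ sStr I e.1 q e.2 := by
      intro q hq hstr
      have hqacc : q ∈ I.acc e.1 := hmatch.1 _ hq
      have h1 : skey I (e.1, q) < skey I (e.1, e.2) :=
        skey_lt_of_sStr hqacc heacc hstr
      have h2 := hkey (e.1, q) hq rfl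
      have : skey I (e.1, e.2) = skey I e := rfl
      omega
    have hexc := excuse ⟨hmatch, hM.2⟩ heacc henm ha
    have hrelE : RelL I (I.lec e.2) e.1 := ⟨e.2, heacc, rfl⟩
    rcases hexc with ⟨hcard, hall⟩ | ⟨hcard, hall⟩
    · left
      refine ⟨hcard, ?_⟩
      intro f hfM hf2
      have hlec : I.lec f.2 = I.lec e.2 := by rw [hf2]
      have hrelF : RelL I (I.lec f.2) f.1 := rel_of_mem hmatch hfM
      have hstr : lStr I (I.lec f.2) f.1 e.1 := by
        rw [hlec]; exact hall f hfM hf2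
      exact pkey_lt_of_lStr hlec hrelF (by rw [hlec]; exact hrelE) hstr
    · right
      refine ⟨hcard, ?_⟩
      intro f hfM hf2
      have hrelF : RelL I (I.lec f.2) f.1 := rel_of_mem hmatch hfM
      have hstr : lStr I (I.lec f.2) f.1 e.1 := by
        rw [hf2]; exact hall f hfM hf2
      exact pkey_lt_of_lStr hf2 hrelF (by rw [hf2]; exact hrelE) hstr
  · exact Finset.empty_subset _
  · -- M is contained in Ymap (XM M)
    intro f hf _
    rw [mem_sortE, Ymap, Finset.mem_sdiff]
    refine ⟨M_subset_EE hmatch hf, ?_⟩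
    intro hc
    rw [Finset.mem_sdiff, CS_XM hmatch] at hc
    exact hc.2 hf
  · intro f hf
    simp at hf

lemma Fmap_XM {M : Finset (S × P)} (hM : SuperStable I M) : Fmap I (XM I M) = XM I M := by
  have hmatch := hM.1
  have hCL := CL_YM hM
  unfold Fmap
  rw [hCL]
  ext e
  rw [Finset.mem_sdiff, Finset.mem_sdiff, Ymap, Finset.mem_sdiff, Finset.mem_sdiff,
    CS_XM hmatch]
  constructor
  · rintro ⟨heEE, hnd⟩
    by_contra hX
    exact hnd ⟨⟨heEE, fun hc => hX hc.1⟩, fun hMm => hX (M_subset_XM hmatch hMm)⟩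
  · intro hX
    refine ⟨XM_subset_EE hX, ?_⟩
    rintro ⟨⟨_, hnd⟩, heM⟩
    exact hnd ⟨hX, heM⟩

end FixedPoint
end SPARH
namespace SPARH
open SPAST Finset
set_option linter.unusedSectionVars false

variable {S P L : Type} [Fintype S] [Fintype P] [Fintype L]
  [DecidableEq S] [DecidableEq P] [DecidableEq L]

section Main

variable {I : SPAST S P L} {M1 M2 : Finset (S × P)}

noncomputable def Wit (I : SPAST S P L) (W0 : Finset (S × P)) : ℕ → Finset (S × P)
  | 0 => W0
  | n + 1 => Fmap I (Wit I W0 n)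

lemma Wit_chain (h1 : SuperStable I M1) (h2 : SuperStable I M2) :
    ∀ n, Wit I (XM I M1 ∪ XM I M2) n ⊆ Wit I (XM I M1 ∪ XM I M2) (n + 1) := by
  intro n
  induction n with
  | zero =>
    intro e he
    show e ∈ Fmap I _
    rcases Finset.mem_union.1 he with h | h
    · have : e ∈ Fmap I (XM I M1) := by rw [Fmap_XM h1]; exact h
      exact Fmap_mono Finset.subset_union_left this
    · have : e ∈ Fmap I (XM I M2) := by rw [Fmap_XM h2]; exact h
      exact Fmap_mono Finset.subset_union_right this
  | succ n ih =>
    exact Fmap_mono ih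

lemma Wit_mono (h1 : SuperStable I M1) (h2 : SuperStable I M2) :
    ∀ n, Wit I (XM I M1 ∪ XM I M2) 0 ⊆ Wit I (XM I M1 ∪ XM I M2) n := by
  intro n
  induction n with
  | zero => exact subset_rfl
  | succ n ih => exact subset_trans ih (Wit_chain h1 h2 n)

lemma exists_fix (h1 : SuperStable I M1) (h2 : SuperStable I M2) :
    ∃ Z : Finset (S × P), Fmap I Z = Z ∧ XM I M1 ⊆ Z ∧ XM I M2 ⊆ Z := by
  set W0 := XM I M1 ∪ XM I M2 with hW0
  have hstab : ∃ n, Wit I W0 n = Wit I W0 (n + 1) := by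
    by_contra hc
    push_neg at hc
    have aux : ∀ n, n ≤ (Wit I W0 n).card := by
      intro n
      induction n with
      | zero => exact Nat.zero_le _
      | succ n ih =>
        have hss : Wit I W0 n ⊂ Wit I W0 (n + 1) :=
          Finset.ssubset_iff_subset_ne.2 ⟨Wit_chain h1 h2 n, hc n⟩
        have := Finset.card_lt_card hss
        omega
    have h1' := aux (Fintype.card (S × P) + 1)
    have h2' := Finset.card_le_univ (Wit I W0 (Fintype.card (S × P) + 1))
    omega
  obtain ⟨n, hn⟩ := hstab
  refine ⟨Wit I W0 n, hn.symm, ?_, ?_⟩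
  · exact subset_trans Finset.subset_union_left (Wit_mono h1 h2 n)
  · exact subset_trans Finset.subset_union_right (Wit_mono h1 h2 n)

lemma fixed_CS_eq_CL {Z : Finset (S × P)} (hfix : Fmap I Z = Z) :
    CS I Z = CL I (Ymap I Z) := by
  apply Finset.Subset.antisymm
  · intro e he
    have heZ : e ∈ Z := CS_subset he
    rw [← hfix, Fmap, Finset.mem_sdiff] at heZ
    have heY : e ∈ Ymap I Z := by
      rw [Ymap, Finset.mem_sdiff]
      exact ⟨heZ.1, fun hc => (Finset.mem_sdiff.1 hc).2 he⟩
    by_contra hne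
    exact heZ.2 (Finset.mem_sdiff.2 ⟨heY, hne⟩)
  · intro e he
    have heY : e ∈ Ymap I Z := CL_subset he
    have heZ : e ∈ Z := by
      rw [← hfix, Fmap, Finset.mem_sdiff]
      exact ⟨Ymap_subset_EE heY, fun hc => (Finset.mem_sdiff.1 hc).2 he⟩
    rw [Ymap, Finset.mem_sdiff] at heY
    by_contra hne
    exact heY.2 (Finset.mem_sdiff.2 ⟨heZ, hne⟩)

lemma matched_sub {M Z : Finset (S × P)} (hM : SuperStable I M) (hfix : Fmap I Z = Z)
    (hXZ : XM I M ⊆ Z) : M.image Prod.fst = (CS I Z).image Prod.fst := by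
  have hmatch := hM.1
  have hsub : M.image Prod.fst ⊆ (CS I Z).image Prod.fst := by
    intro s hs
    rw [Finset.mem_image] at hs ⊢
    obtain ⟨e, heM, hes⟩ := hs
    subst hes
    have heZ : e ∈ Z := hXZ (M_subset_XM hmatch heM)
    obtain ⟨e', he', he's⟩ := CS_exists ⟨e, heZ, rfl, hmatch.1 e heM⟩
    exact ⟨e', he', he's⟩
  have hC1 : M = CL I (Ymap I (XM I M)) := (CL_YM hM).symm
  have hC2 : CS I Z = CL I (Ymap I Z) := fixed_CS_eq_CL hfix
  have hYsub : Ymap I Z ⊆ Ymap I (XM I M) := Ymap_anti hXZ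
  have hcard : (CS I Z).card ≤ M.card := by
    rw [hC1, hC2]
    exact CL_LAD hYsub Ymap_subset_EE
  have hinj1 : (M.image Prod.fst).card = M.card := by
    apply Finset.card_image_of_injOn
    intro e he f hf h
    have h1 : (e.1, e.2) ∈ M := by
      have : (e.1, e.2) = e := rfl
      rw [this]; exact he
    have h2 : (e.1, f.2) ∈ M := by
      have : (e.1, f.2) = f := Prod.ext h rfl
      rw [this]; exact hf
    exact Prod.ext h (hmatch.2.1 e.1 e.2 f.2 h1 h2)
  have hinj2 : ((CS I Z).image Prod.fst).card = (CS I Z).card := by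
    apply Finset.card_image_of_injOn
    intro e he f hf h
    exact CS_unique he hf h
  apply Finset.eq_of_subset_of_card_le hsub
  omega

lemma image_fst_eq (h1 : SuperStable I M1) (h2 : SuperStable I M2) :
    M1.image Prod.fst = M2.image Prod.fst := by
  obtain ⟨Z, hfix, hZ1, hZ2⟩ := exists_fix h1 h2
  rw [matched_sub h1 hfix hZ1, matched_sub h2 hfix hZ2]

end Main
end SPARH

open SPAST in
theorem super_stable_same_unmatched {S P L : Type} [Fintype S] [Fintype P] [Fintype L]
    [DecidableEq S] [DecidableEq P] [DecidableEq L]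
    (I : SPAST S P L) (M1 M2 : Finset (S × P))
    (h1 : SuperStable I M1) (h2 : SuperStable I M2) :
    ∀ s : S, (∀ p : P, (s, p) ∉ M1) ↔ (∀ p : P, (s, p) ∉ M2) := by
  intro s
  have himg := SPARH.image_fst_eq h1 h2
  have key : ∀ M : Finset (S × P), (∀ p : P, (s, p) ∉ M) ↔ s ∉ M.image Prod.fst := by
    intro M
    constructor
    · intro h hc
      rw [Finset.mem_image] at hc
      obtain ⟨e, heM, hes⟩ := hc
      apply h e.2
      have : (s, e.2) = e := Prod.ext hes.symm rfl
      rw [this]; exact heM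
    · intro h p hp
      exact h (Finset.mem_image.2 ⟨(s, p), hp, rfl⟩)
  rw [key M1, key M2, himg]
end
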